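/- arXiv:1412.0220 — 3 statements merged into one kernel-verified Lean document; each statement's English description precedes it below -/
import Mathlib

section
/- Let ν be a probability measure on [0,∞), α > 0, n ≥ 2 an integer, and set G(t) = (Φ_ν(t))^n. Let F_n denote the cumulative distribution function of the n-fold Kendall convolution power ν^{△_α n}. Then for every x > 0 at which the map x ↦ G(1/x) is differentiable and F_n is continuous, F_n(x) = G(1/x) + (x/α) · (d/dx)[G(1/x)]. -/
open MeasureTheory Set
open Filter Topology
open scoped ENNReal

/-- The Pareto probability measure `π_{2α}` on `ℝ`, with density
`2α x^(-(2α+1)) 1_{(1,∞)}(x)` with respect to Lebesgue measure. -/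
noncomputable def pareto (α : ℝ) : Measure ℝ :=
  volume.withDensity
    (fun x => ENNReal.ofReal (if 1 < x then 2 * α * x ^ (-(2 * α) - 1) else 0))

/-- The Kendall probability kernel `ρ_{a,b} = (1 - (a/b)^α) δ_b + (a/b)^α T_b π_{2α}`
for `0 ≤ a ≤ b` (with `ρ_{0,0} = δ_0`). -/
noncomputable def kendallKernelLe (α a b : ℝ) : Measure ℝ :=
  if b = 0 then Measure.dirac 0
  else ENNReal.ofReal (1 - (a / b) ^ α) • Measure.dirac b
      + ENNReal.ofReal ((a / b) ^ α) • Measure.map (fun x => b * x) (pareto α)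

/-- The Kendall kernel `ρ_{x,y}`, extended symmetrically. -/
noncomputable def kendallKernel (α x y : ℝ) : Measure ℝ :=
  kendallKernelLe α (min x y) (max x y)

/-- The Kendall convolution `λ △_α ν`, defined by
`(λ △_α ν)(A) = ∫∫ ρ_{x,y}(A) λ(dx) ν(dy)`. -/
noncomputable def kendallConv (α : ℝ) (lam ν : Measure ℝ) : Measure ℝ :=
  lam.bind (fun x => ν.bind (fun y => kendallKernel α x y))

/-- The `n`-fold Kendall convolution power `ν^{△_α n}`, with `ν^{△_α 0} = δ_0`. -/
noncomputable def kendallPow (α : ℝ) (ν : Measure ℝ) : ℕ → Measure ℝ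
  | 0 => Measure.dirac 0
  | n + 1 => kendallConv α (kendallPow α ν n) ν

/-- The Kendall–Williamson transform `Φ_ν(t) = ∫ (1 - (t s)^α)_+ ν(ds)`. -/
noncomputable def williamson (α : ℝ) (ν : Measure ℝ) (t : ℝ) : ℝ :=
  ∫ s, max (1 - (t * s) ^ α) 0 ∂ν

set_option maxHeartbeats 1000000



lemma pareto_eq (α : ℝ) : pareto α = ProbabilityTheory.paretoMeasure 1 (2 * α) := by
  rw [pareto, ProbabilityTheory.paretoMeasure]
  refine withDensity_congr_ae ?_
  have h1 : volume ({1} : Set ℝ) = 0 := measure_singleton 1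
  rw [Filter.EventuallyEq, ae_iff]
  refine measure_mono_null (fun x hx => ?_) h1
  simp only [mem_setOf_eq] at hx
  by_contra hne
  apply hx
  have hxne : x ≠ 1 := by simpa using hne
  rw [ProbabilityTheory.paretoPDF_eq]
  congr 1
  rcases lt_trichotomy x 1 with h | h | h
  · rw [if_neg (by linarith), if_neg (by linarith)]
  · exact absurd h hxne
  · rw [if_pos h, if_pos h.le, Real.one_rpow, mul_one]
    congr 1
    ring

lemma pareto_isProb {α : ℝ} (hα : 0 < α) : IsProbabilityMeasure (pareto α) := by
  rw [pareto_eq]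
  exact ProbabilityTheory.isProbabilityMeasure_paretoMeasure one_pos (by linarith)

lemma pareto_Iio_zero {α : ℝ} : pareto α (Iio 0) = 0 := by
  rw [pareto, withDensity_apply _ measurableSet_Iio]
  rw [setLIntegral_congr_fun (g := fun _ => 0) measurableSet_Iio]
  · simp
  · rintro a (ha : a < 0)
    dsimp only
    rw [if_neg (by linarith)]
    simp


-- integrability of the bounded-by-density integrand
lemma pareto_intOn {α c : ℝ} (hα : 0 < α) (hc : 0 ≤ c) :
    IntegrableOn (fun x : ℝ => 2 * α * x ^ (-(2 * α) - 1) * max (1 - (c * x) ^ α) 0)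
      (Ioi 1) volume := by
  have hbase : IntegrableOn (fun x : ℝ => 2 * α * x ^ (-(2 * α) - 1)) (Ioi 1) volume :=
    (integrableOn_Ioi_rpow_of_lt (by linarith) one_pos).const_mul (2 * α)
  refine hbase.mono' ?_ ?_
  · apply Measurable.aestronglyMeasurable
    have h1 : Measurable fun x : ℝ => 2 * α * x ^ (-(2 * α) - 1) := by fun_prop
    have h2 : Measurable fun x : ℝ => max (1 - (c * x) ^ α) 0 := by fun_prop
    exact h1.mul h2
  · filter_upwards [ae_restrict_mem measurableSet_Ioi] with x (hx : 1 < x)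
    have hx0 : (0:ℝ) < x := by linarith
    have hd0 : 0 ≤ 2 * α * x ^ (-(2 * α) - 1) := by positivity
    have hm0 : 0 ≤ max (1 - (c * x) ^ α) 0 := le_max_right _ _
    have hm1 : max (1 - (c * x) ^ α) 0 ≤ 1 := by
      apply max_le _ zero_le_one
      have : 0 ≤ (c * x) ^ α := Real.rpow_nonneg (by positivity) _
      linarith
    rw [Real.norm_eq_abs, abs_of_nonneg (mul_nonneg hd0 hm0)]
    calc 2 * α * x ^ (-(2 * α) - 1) * max (1 - (c * x) ^ α) 0
        ≤ 2 * α * x ^ (-(2 * α) - 1) * 1 := by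
          exact mul_le_mul_of_nonneg_left hm1 hd0
      _ = 2 * α * x ^ (-(2 * α) - 1) := mul_one _

lemma pareto_real_int {α c : ℝ} (hα : 0 < α) (hc : 0 ≤ c) :
    ∫ x in Ioi 1, 2 * α * x ^ (-(2 * α) - 1) * max (1 - (c * x) ^ α) 0
      = (max (1 - c ^ α) 0) ^ 2 := by
  have hbase : ∫ x in Ioi (1:ℝ), 2 * α * x ^ (-(2 * α) - 1) = 1 := by
    rw [MeasureTheory.integral_const_mul, integral_Ioi_rpow_of_lt (by linarith) one_pos]
    rw [Real.one_rpow]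
    field_simp
    ring
  rcases eq_or_lt_of_le hc with hc0 | hcpos
  · -- c = 0
    rw [← hc0]
    have : ∀ x : ℝ, max (1 - ((0:ℝ) * x) ^ α) 0 = 1 := by
      intro x
      rw [zero_mul, Real.zero_rpow hα.ne']
      simp
    simp only [this, mul_one]
    rw [hbase]
    rw [Real.zero_rpow hα.ne']
    norm_num
  rcases le_or_gt 1 c with hc1 | hc1
  · -- 1 ≤ c : everything is zero
    have hz : ∀ x ∈ Ioi (1:ℝ), 2 * α * x ^ (-(2 * α) - 1) * max (1 - (c * x) ^ α) 0 = 0 := by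
      intro x hx
      have hx1 : (1:ℝ) < x := hx
      have hcx : 1 ≤ c * x := by nlinarith
      have : 1 ≤ (c * x) ^ α := Real.one_le_rpow hcx hα.le
      rw [max_eq_right (by linarith), mul_zero]
    rw [setIntegral_congr_fun measurableSet_Ioi hz]
    have : 1 ≤ c ^ α := Real.one_le_rpow hc1 hα.le
    rw [max_eq_right (by linarith)]
    simp
  · -- 0 < c < 1
    set u : ℝ := c⁻¹ with hu
    have hu1 : 1 < u := (one_lt_inv₀ hcpos).mpr hc1
    have hsplit : Ioi (1:ℝ) = Ioc 1 u ∪ Ioi u := (Ioc_union_Ioi_eq_Ioi hu1.le).symm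
    have hint := pareto_intOn hα hc (c := c)
    rw [hsplit, setIntegral_union (Ioc_disjoint_Ioi le_rfl) measurableSet_Ioi
      (hint.mono_set (by rw [hsplit]; exact subset_union_left))
      (hint.mono_set (by rw [hsplit]; exact subset_union_right))]
    have hIoi : ∫ x in Ioi u, 2 * α * x ^ (-(2 * α) - 1) * max (1 - (c * x) ^ α) 0 = 0 := by
      rw [setIntegral_congr_fun measurableSet_Ioi (g := fun _ => 0)]
      · simp
      · intro x hx
        dsimp only
        have hx1 : u < x := hx
        have hcx : 1 < c * x := by
          rw [hu] at hx1
          calc (1:ℝ) = c * c⁻¹ := by field_simp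
          _ < c * x := by exact mul_lt_mul_of_pos_left hx1 hcpos
        have : 1 ≤ (c * x) ^ α := Real.one_le_rpow hcx.le hα.le
        rw [max_eq_right (by linarith), mul_zero]
    rw [hIoi, add_zero]
    have hC1 : c ^ α ≤ 1 := Real.rpow_le_one hc hc1.le hα.le
    set C : ℝ := c ^ α with hC
    have hCpos : 0 < C := Real.rpow_pos_of_pos hcpos _
    have hcongr : ∀ x ∈ Ioc (1:ℝ) u,
        2 * α * x ^ (-(2 * α) - 1) * max (1 - (c * x) ^ α) 0
          = 2 * α * x ^ (-(2 * α) - 1) - 2 * α * C * x ^ (-α - 1) := by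
      intro x hx
      obtain ⟨hx1, hxu⟩ := hx
      have hx0 : (0:ℝ) < x := by linarith
      have hcx : c * x ≤ 1 := by
        calc c * x ≤ c * u := mul_le_mul_of_nonneg_left hxu hc
        _ = 1 := by rw [hu, mul_inv_cancel₀ hcpos.ne']
      have h1 : (c * x) ^ α ≤ 1 := Real.rpow_le_one (by positivity) hcx hα.le
      rw [max_eq_left (by linarith)]
      have hmul : (c * x) ^ α = C * x ^ α := Real.mul_rpow hc hx0.le
      rw [hmul]
      have hxx : x ^ (-(2 * α) - 1) * x ^ α = x ^ (-α - 1) := by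
        rw [← Real.rpow_add hx0]
        ring_nf
      rw [← hxx]
      ring
    rw [setIntegral_congr_fun measurableSet_Ioc hcongr]
    rw [← intervalIntegral.integral_of_le hu1.le]
    have hne : (0:ℝ) ∉ uIcc 1 u := by
      rw [uIcc_of_le hu1.le]
      rintro ⟨h0, _⟩; linarith
    have hi1 : IntervalIntegrable (fun x : ℝ => 2 * α * x ^ (-(2 * α) - 1)) volume 1 u :=
      (intervalIntegral.intervalIntegrable_rpow (Or.inr hne)).const_mul _
    have hi2 : IntervalIntegrable (fun x : ℝ => 2 * α * C * x ^ (-α - 1)) volume 1 u :=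
      (intervalIntegral.intervalIntegrable_rpow (Or.inr hne)).const_mul _
    rw [intervalIntegral.integral_sub hi1 hi2, intervalIntegral.integral_const_mul,
      intervalIntegral.integral_const_mul, integral_rpow (Or.inr ⟨by intro h; linarith, hne⟩),
      integral_rpow (Or.inr ⟨by intro h; linarith, hne⟩)]
    have e1 : -(2 * α) - 1 + 1 = -(2 * α) := by ring
    have e2 : -α - 1 + 1 = -α := by ring
    rw [e1, e2, Real.one_rpow]
    have hu2 : u ^ (-(2*α)) = C ^ 2 := by
      rw [hu, Real.inv_rpow hc, Real.rpow_neg hc, inv_inv,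
        show 2*α = α + α by ring, Real.rpow_add hcpos, hC, sq]
    have hu3 : u ^ (-α) = C := by
      rw [hu, Real.inv_rpow hc, Real.rpow_neg hc, inv_inv, hC]
    rw [hu2, hu3, max_eq_left (by linarith)]
    simp only [Real.one_rpow]
    field_simp
    ring



lemma kwf_meas (α t : ℝ) : Measurable (fun s : ℝ => ENNReal.ofReal (max (1 - (t * s) ^ α) 0)) := by
  fun_prop

lemma pareto_lint {α : ℝ} (hα : 0 < α) {c : ℝ} (hc : 0 ≤ c) :
    ∫⁻ x, ENNReal.ofReal (max (1 - (c * x) ^ α) 0) ∂(pareto α)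
      = ENNReal.ofReal ((max (1 - c ^ α) 0) ^ 2) := by
  have hd : Measurable (fun x : ℝ =>
      ENNReal.ofReal (if 1 < x then 2 * α * x ^ (-(2 * α) - 1) else 0)) := by
    apply Measurable.ennreal_ofReal
    apply Measurable.ite measurableSet_Ioi _ measurable_const
    fun_prop
  rw [pareto, lintegral_withDensity_eq_lintegral_mul _ hd (kwf_meas α c)]
  have heq : ∀ x : ℝ,
      ((fun x => ENNReal.ofReal (if 1 < x then 2 * α * x ^ (-(2 * α) - 1) else 0)) *
        (fun x => ENNReal.ofReal (max (1 - (c * x) ^ α) 0))) x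
      = (Ioi (1:ℝ)).indicator
          (fun x => ENNReal.ofReal (2 * α * x ^ (-(2 * α) - 1) * max (1 - (c * x) ^ α) 0)) x := by
    intro x
    simp only [Pi.mul_apply]
    by_cases hx : 1 < x
    · rw [if_pos hx, indicator_of_mem (show x ∈ Ioi 1 from hx)]
      exact (ENNReal.ofReal_mul (by positivity)).symm
    · rw [if_neg hx, indicator_of_notMem (show x ∉ Ioi 1 from hx)]
      simp
  rw [lintegral_congr heq, lintegral_indicator measurableSet_Ioi _,
    ← ofReal_integral_eq_lintegral_ofReal (pareto_intOn hα hc), pareto_real_int hα hc]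
  filter_upwards [ae_restrict_mem measurableSet_Ioi] with x (hx : 1 < x)
  have hx0 : (0:ℝ) < x := by linarith
  have : 0 ≤ 2 * α * x ^ (-(2 * α) - 1) := by positivity
  exact mul_nonneg this (le_max_right _ _)





section
variable {α : ℝ} (hα : 0 < α)

lemma max0_one {t : ℝ} (hα : 0 < α) : max (1 - (t * 0) ^ α) 0 = 1 := by
  rw [mul_zero, Real.zero_rpow hα.ne']
  simp

include hα

lemma kendallKernelLe_lint {a b t : ℝ} (ha : 0 ≤ a) (hab : a ≤ b) (ht : 0 ≤ t) :
    ∫⁻ s, ENNReal.ofReal (max (1 - (t * s) ^ α) 0) ∂(kendallKernelLe α a b)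
      = ENNReal.ofReal (max (1 - (t * a) ^ α) 0) * ENNReal.ofReal (max (1 - (t * b) ^ α) 0) := by
  have hb : 0 ≤ b := le_trans ha hab
  rcases eq_or_lt_of_le hb with hb0 | hb0
  · -- b = 0, hence a = 0
    have ha0 : a = 0 := le_antisymm (hb0 ▸ hab) ha
    rw [kendallKernelLe, if_pos hb0.symm, lintegral_dirac' _ (kwf_meas α t), ha0, ← hb0,
      max0_one hα]
    simp
  · rw [kendallKernelLe, if_neg hb0.ne', lintegral_add_measure, lintegral_smul_measure,
      lintegral_smul_measure, lintegral_dirac' _ (kwf_meas α t),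
      lintegral_map (kwf_meas α t) (measurable_const_mul b)]
    have hq0 : 0 ≤ (a / b) ^ α := Real.rpow_nonneg (by positivity) _
    have hq1 : (a / b) ^ α ≤ 1 := Real.rpow_le_one (by positivity) (by
      rw [div_le_one hb0]; exact hab) hα.le
    set q : ℝ := (a / b) ^ α with hq
    have hmap : ∫⁻ x, ENNReal.ofReal (max (1 - (t * (b * x)) ^ α) 0) ∂(pareto α)
        = ENNReal.ofReal ((max (1 - (t * b) ^ α) 0) ^ 2) := by
      have : ∀ x : ℝ, t * (b * x) = (t * b) * x := fun x => by ring
      simp_rw [this]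
      exact pareto_lint hα (by positivity)
    rw [hmap]
    have hta : (t * a) ^ α = q * (t * b) ^ α := by
      rw [hq, ← Real.mul_rpow (by positivity) (by positivity)]
      congr 1
      field_simp
    set B : ℝ := (t * b) ^ α with hB
    have hB0 : 0 ≤ B := Real.rpow_nonneg (by positivity) _
    rw [hta, smul_eq_mul, smul_eq_mul]
    rw [← ENNReal.ofReal_mul (by linarith), ← ENNReal.ofReal_mul hq0,
      ← ENNReal.ofReal_add (mul_nonneg (by linarith) (le_max_right _ _))
        (mul_nonneg hq0 (by positivity)),
      ← ENNReal.ofReal_mul (le_max_right _ _)]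
    congr 1
    rcases le_or_gt B 1 with hB1 | hB1
    · rw [max_eq_left (by linarith), max_eq_left (by nlinarith)]
      ring
    · rw [max_eq_right (by linarith)]
      ring

lemma kendallKernel_lint {x y t : ℝ} (hx : 0 ≤ x) (hy : 0 ≤ y) (ht : 0 ≤ t) :
    ∫⁻ s, ENNReal.ofReal (max (1 - (t * s) ^ α) 0) ∂(kendallKernel α x y)
      = ENNReal.ofReal (max (1 - (t * x) ^ α) 0) * ENNReal.ofReal (max (1 - (t * y) ^ α) 0) := by
  rw [kendallKernel]
  rcases le_total x y with h | h
  · rw [min_eq_left h, max_eq_right h, kendallKernelLe_lint hα hx h ht]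
  · rw [min_eq_right h, max_eq_left h, kendallKernelLe_lint hα hy h ht, mul_comm]

lemma kendallKernelLe_univ {a b : ℝ} (ha : 0 ≤ a) (hab : a ≤ b) :
    kendallKernelLe α a b univ = 1 := by
  have hb : 0 ≤ b := le_trans ha hab
  rcases eq_or_lt_of_le hb with hb0 | hb0
  · rw [kendallKernelLe, if_pos hb0.symm]; simp
  · haveI := pareto_isProb hα
    rw [kendallKernelLe, if_neg hb0.ne']
    have hq0 : 0 ≤ (a / b) ^ α := Real.rpow_nonneg (by positivity) _
    have hq1 : (a / b) ^ α ≤ 1 := Real.rpow_le_one (by positivity) (by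
      rw [div_le_one hb0]; exact hab) hα.le
    rw [Measure.add_apply, Measure.smul_apply, Measure.smul_apply, smul_eq_mul, smul_eq_mul,
      Measure.dirac_apply_of_mem (mem_univ b),
      Measure.map_apply (measurable_const_mul b) MeasurableSet.univ]
    rw [preimage_univ, measure_univ, mul_one, mul_one,
      ← ENNReal.ofReal_add (by linarith) hq0]
    norm_num

lemma kendallKernelLe_Iio {a b : ℝ} (ha : 0 ≤ a) (hab : a ≤ b) :
    kendallKernelLe α a b (Iio 0) = 0 := by
  have hb : 0 ≤ b := le_trans ha hab
  rcases eq_or_lt_of_le hb with hb0 | hb0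
  · rw [kendallKernelLe, if_pos hb0.symm, Measure.dirac_apply' _ measurableSet_Iio]
    simp
  · rw [kendallKernelLe, if_neg hb0.ne', Measure.add_apply, Measure.smul_apply,
      Measure.smul_apply, smul_eq_mul, smul_eq_mul,
      Measure.dirac_apply' _ measurableSet_Iio,
      Measure.map_apply (measurable_const_mul b) measurableSet_Iio]
    have h1 : (Iio 0).indicator (1 : ℝ → ℝ≥0∞) b = 0 := by
      rw [indicator_of_notMem]
      simp only [mem_Iio, not_lt]
      exact hb
    have h2 : (fun x => b * x) ⁻¹' (Iio 0) = Iio 0 := by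
      ext z
      simp only [mem_preimage, mem_Iio]
      constructor
      · intro h
        by_contra hz
        push_neg at hz
        nlinarith
      · intro h
        exact mul_neg_of_pos_of_neg hb0 h
    rw [h1, h2, pareto_Iio_zero]
    simp

lemma kendallKernel_univ {x y : ℝ} (hx : 0 ≤ x) (hy : 0 ≤ y) :
    kendallKernel α x y univ = 1 := by
  rw [kendallKernel]
  rcases le_total x y with h | h
  · rw [min_eq_left h, max_eq_right h]; exact kendallKernelLe_univ hα hx h
  · rw [min_eq_right h, max_eq_left h]; exact kendallKernelLe_univ hα hy h

lemma kendallKernel_Iio {x y : ℝ} (hx : 0 ≤ x) (hy : 0 ≤ y) :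
    kendallKernel α x y (Iio 0) = 0 := by
  rw [kendallKernel]
  rcases le_total x y with h | h
  · rw [min_eq_left h, max_eq_right h]; exact kendallKernelLe_Iio hα hx h
  · rw [min_eq_right h, max_eq_left h]; exact kendallKernelLe_Iio hα hy h

end






variable {α : ℝ}

lemma measurable_kendallKernel (hα : 0 < α) :
    Measurable (Function.uncurry (kendallKernel α)) := by
  haveI := pareto_isProb hα
  apply Measure.measurable_of_measurable_coe
  intro s hs
  have hmax : Measurable fun p : ℝ × ℝ => max p.1 p.2 := measurable_fst.max measurable_snd
  have hmin : Measurable fun p : ℝ × ℝ => min p.1 p.2 := measurable_fst.min measurable_snd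
  have hmap : Measurable fun b : ℝ => (Measure.map (fun x => b * x) (pareto α)) s := by
    have heq : ∀ b : ℝ, (Measure.map (fun x => b * x) (pareto α)) s
        = ∫⁻ x, s.indicator (fun _ => (1:ℝ≥0∞)) (b * x) ∂(pareto α) := by
      intro b
      rw [Measure.map_apply (measurable_const_mul b) hs]
      rw [← lintegral_indicator_one (hs.preimage (measurable_const_mul b))]
      apply lintegral_congr
      intro x
      by_cases hx : b * x ∈ s
      · rw [indicator_of_mem (show x ∈ (fun x => b*x) ⁻¹' s from hx), indicator_of_mem hx]
        rfl
      · rw [indicator_of_notMem (show x ∉ (fun x => b*x) ⁻¹' s from hx),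
          indicator_of_notMem hx]
    simp_rw [heq]
    apply Measurable.lintegral_prod_right
    exact (measurable_const.indicator hs).comp (measurable_fst.mul measurable_snd)
  have hcoe : ∀ p : ℝ × ℝ, Function.uncurry (kendallKernel α) p s
      = if max p.1 p.2 = 0 then (Measure.dirac (0:ℝ)) s
        else ENNReal.ofReal (1 - (min p.1 p.2 / max p.1 p.2) ^ α) *
            (Measure.dirac (max p.1 p.2)) s
          + ENNReal.ofReal ((min p.1 p.2 / max p.1 p.2) ^ α) *
            (Measure.map (fun x => max p.1 p.2 * x) (pareto α)) s := by
    intro p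
    rw [Function.uncurry, kendallKernel, kendallKernelLe]
    by_cases h : max p.1 p.2 = 0
    · rw [if_pos h, if_pos h]
    · rw [if_neg h, if_neg h, Measure.add_apply, Measure.smul_apply, Measure.smul_apply,
        smul_eq_mul, smul_eq_mul]
  simp_rw [hcoe]
  apply Measurable.ite (hmax (measurableSet_singleton 0)) measurable_const
  apply Measurable.add
  · apply Measurable.mul
    · apply Measurable.ennreal_ofReal
      have : Measurable fun p : ℝ × ℝ => (min p.1 p.2 / max p.1 p.2) ^ α := by fun_prop
      fun_prop
    · exact ((Measure.measurable_coe hs).comp Measure.measurable_dirac).comp hmax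
  · apply Measurable.mul
    · apply Measurable.ennreal_ofReal
      fun_prop
    · exact hmap.comp hmax

lemma measurable_kendallKernel_right (hα : 0 < α) (x : ℝ) :
    Measurable (fun y => kendallKernel α x y) :=
  (measurable_kendallKernel hα).comp measurable_prodMk_left

lemma measurable_bind_kendallKernel (hα : 0 < α) (ν : Measure ℝ) [SFinite ν] :
    Measurable (fun x => ν.bind (fun y => kendallKernel α x y)) := by
  apply Measure.measurable_of_measurable_coe
  intro s hs
  have heq : ∀ x, ν.bind (fun y => kendallKernel α x y) s
      = ∫⁻ y, kendallKernel α x y s ∂ν :=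
    fun x => Measure.bind_apply hs (measurable_kendallKernel_right hα x).aemeasurable
  simp_rw [heq]
  apply Measurable.lintegral_prod_right
  exact (Measure.measurable_coe hs).comp (measurable_kendallKernel hα)

lemma kendallConv_lint (hα : 0 < α) (μ ν : Measure ℝ) [SFinite ν]
    {f : ℝ → ℝ≥0∞} (hf : Measurable f) :
    ∫⁻ s, f s ∂(kendallConv α μ ν)
      = ∫⁻ x, ∫⁻ y, (∫⁻ s, f s ∂(kendallKernel α x y)) ∂ν ∂μ := by
  rw [kendallConv, MeasureTheory.Measure.lintegral_bind (measurable_bind_kendallKernel hα ν).aemeasurable hf.aemeasurable]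
  congr 1
  funext x
  exact MeasureTheory.Measure.lintegral_bind (measurable_kendallKernel_right hα x).aemeasurable hf.aemeasurable

lemma kendallConv_apply (hα : 0 < α) (μ ν : Measure ℝ) [SFinite ν]
    {s : Set ℝ} (hs : MeasurableSet s) :
    kendallConv α μ ν s = ∫⁻ x, ∫⁻ y, kendallKernel α x y s ∂ν ∂μ := by
  rw [kendallConv, Measure.bind_apply hs (measurable_bind_kendallKernel hα ν).aemeasurable]
  congr 1
  funext x
  exact Measure.bind_apply hs (measurable_kendallKernel_right hα x).aemeasurable



section
variable {α : ℝ} (hα : 0 < α)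

lemma ae_nonneg_of_Iio {μ : Measure ℝ} (h : μ (Iio 0) = 0) : ∀ᵐ s ∂μ, 0 ≤ s := by
  rw [ae_iff]
  convert h using 2
  ext s
  simp

include hα

lemma kendallPow_props (ν : Measure ℝ) [IsProbabilityMeasure ν] (hν : ν (Iio 0) = 0) (n : ℕ) :
    IsProbabilityMeasure (kendallPow α ν n) ∧ (kendallPow α ν n) (Iio 0) = 0 ∧
    ∀ t, 0 ≤ t → ∫⁻ s, ENNReal.ofReal (max (1 - (t * s) ^ α) 0) ∂(kendallPow α ν n)
        = (∫⁻ s, ENNReal.ofReal (max (1 - (t * s) ^ α) 0) ∂ν) ^ n := by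
  have hν0 : ∀ᵐ y ∂ν, 0 ≤ y := ae_nonneg_of_Iio hν
  induction n with
  | zero =>
    refine ⟨Measure.dirac.isProbabilityMeasure, ?_, ?_⟩
    · rw [kendallPow, Measure.dirac_apply' _ measurableSet_Iio]
      simp
    · intro t ht
      rw [kendallPow, lintegral_dirac' _ (kwf_meas α t), max0_one hα, pow_zero]
      simp
  | succ n ih =>
    obtain ⟨ihp, ihn, iht⟩ := ih
    have hμ0 : ∀ᵐ x ∂(kendallPow α ν n), 0 ≤ x := ae_nonneg_of_Iio ihn
    have hpow : kendallPow α ν (n+1) = kendallConv α (kendallPow α ν n) ν := rfl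
    have hprob : IsProbabilityMeasure (kendallPow α ν (n+1)) := by
      constructor
      rw [hpow, kendallConv_apply hα _ _ MeasurableSet.univ]
      have : ∫⁻ x, (∫⁻ y, kendallKernel α x y univ ∂ν) ∂(kendallPow α ν n)
          = ∫⁻ x, 1 ∂(kendallPow α ν n) := by
        apply lintegral_congr_ae
        filter_upwards [hμ0] with x hx
        have : ∫⁻ y, kendallKernel α x y univ ∂ν = ∫⁻ y, 1 ∂ν := by
          apply lintegral_congr_ae
          filter_upwards [hν0] with y hy
          exact kendallKernel_univ hα hx hy
        rw [this, lintegral_one, measure_univ]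
      rw [this, lintegral_one, measure_univ]
    refine ⟨hprob, ?_, ?_⟩
    · rw [hpow, kendallConv_apply hα _ _ measurableSet_Iio]
      have : ∫⁻ x, (∫⁻ y, kendallKernel α x y (Iio 0) ∂ν) ∂(kendallPow α ν n)
          = ∫⁻ x, 0 ∂(kendallPow α ν n) := by
        apply lintegral_congr_ae
        filter_upwards [hμ0] with x hx
        have : ∫⁻ y, kendallKernel α x y (Iio 0) ∂ν = ∫⁻ y, 0 ∂ν := by
          apply lintegral_congr_ae
          filter_upwards [hν0] with y hy
          exact kendallKernel_Iio hα hx hy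
        rw [this, lintegral_zero]
      rw [this, lintegral_zero]
    · intro t ht
      rw [hpow, kendallConv_lint hα _ _ (kwf_meas α t)]
      have : ∫⁻ x, (∫⁻ y, (∫⁻ s, ENNReal.ofReal (max (1 - (t * s) ^ α) 0)
            ∂(kendallKernel α x y)) ∂ν) ∂(kendallPow α ν n)
          = ∫⁻ x, ENNReal.ofReal (max (1 - (t * x) ^ α) 0) *
              (∫⁻ y, ENNReal.ofReal (max (1 - (t * y) ^ α) 0) ∂ν) ∂(kendallPow α ν n) := by
        apply lintegral_congr_ae
        filter_upwards [hμ0] with x hx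
        have : ∫⁻ y, (∫⁻ s, ENNReal.ofReal (max (1 - (t * s) ^ α) 0)
              ∂(kendallKernel α x y)) ∂ν
            = ∫⁻ y, ENNReal.ofReal (max (1 - (t * x) ^ α) 0) *
                ENNReal.ofReal (max (1 - (t * y) ^ α) 0) ∂ν := by
          apply lintegral_congr_ae
          filter_upwards [hν0] with y hy
          exact kendallKernel_lint hα hx hy ht
        rw [this, lintegral_const_mul _ (kwf_meas α t)]
      rw [this, lintegral_mul_const _ (kwf_meas α t), iht t ht, pow_succ]
end



lemma williamson_eq (α : ℝ) (μ : Measure ℝ) (t : ℝ) :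
    williamson α μ t = (∫⁻ s, ENNReal.ofReal (max (1 - (t * s) ^ α) 0) ∂μ).toReal := by
  rw [williamson]
  apply integral_eq_lintegral_of_nonneg_ae (ae_of_all _ fun s => le_max_right _ _)
  apply Measurable.aestronglyMeasurable
  fun_prop


/-- Inversion of the Kendall–Williamson transform: if `G(t) = (Φ_ν(t))^n` and `F_n` is the
cdf of `ν^{△_α n}`, then at every `x > 0` where `x ↦ G(1/x)` is differentiable and `F_n`
is continuous, `F_n(x) = G(1/x) + (x/α) (d/dx)[G(1/x)]`. -/
theorem kendallPow_cdf_eq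
    (ν : Measure ℝ) [IsProbabilityMeasure ν] (hν : ν (Set.Iio 0) = 0)
    (α : ℝ) (hα : 0 < α) (n : ℕ) (hn : 2 ≤ n) (x : ℝ) (hx : 0 < x) (g' : ℝ)
    (hdiff : HasDerivAt (fun y : ℝ => (williamson α ν (1 / y)) ^ n) g' x)
    (hcont : ContinuousAt (fun y : ℝ => ((kendallPow α ν n) (Set.Iic y)).toReal) x) :
    ((kendallPow α ν n) (Set.Iic x)).toReal
      = (williamson α ν (1 / x)) ^ n + (x / α) * g' := by
  obtain ⟨hprob, hsupp, htrans⟩ := kendallPow_props hα ν hν n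
  set μ := kendallPow α ν n with hμdef
  haveI := hprob
  have hμ0 : ∀ᵐ s ∂μ, 0 ≤ s := ae_nonneg_of_Iio hsupp
  set F : ℝ → ℝ := fun y => (μ (Iic y)).toReal with hF
  set H : ℝ → ℝ := fun y => williamson α μ (1/y) with hH
  have hxne := hx.ne'
  have hWpow : ∀ t : ℝ, 0 ≤ t → williamson α μ t = (williamson α ν t) ^ n := by
    intro t ht
    rw [williamson_eq, williamson_eq, htrans t ht, ENNReal.toReal_pow]
  -- transfer the derivative hypothesis to H
  have hHd : HasDerivAt H g' x := by
    apply hdiff.congr_of_eventuallyEq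
    filter_upwards [isOpen_Ioi.mem_nhds (show x ∈ Ioi 0 from hx)] with y (hy : 0 < y)
    exact hWpow (1/y) (by positivity)
  have hK : HasDerivAt (fun y => y ^ α * H y) (α * x ^ (α-1) * H x + x ^ α * g') x :=
    (Real.hasDerivAt_rpow_const (Or.inl hxne)).mul hHd
  set L : ℝ → ℝ := fun y => ∫ s, max (y ^ α - s ^ α) 0 ∂μ with hL
  have hKL : ∀ y : ℝ, 0 < y → y ^ α * H y = L y := by
    intro y hy
    have hyα : 0 < y ^ α := Real.rpow_pos_of_pos hy α
    have e : y ^ α * H y = ∫ s, y ^ α * max (1 - (1/y * s) ^ α) 0 ∂μ := by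
      rw [show H y = ∫ s, max (1 - (1/y * s) ^ α) 0 ∂μ from rfl,
        ← MeasureTheory.integral_const_mul]
    rw [e]
    apply integral_congr_ae
    filter_upwards [hμ0] with s hs
    have h1 : (1/y * s) ^ α = s ^ α / y ^ α := by
      rw [show (1:ℝ)/y * s = s / y by ring, Real.div_rpow hs hy.le]
    rw [mul_max_of_nonneg _ _ hyα.le, mul_zero, h1]
    congr 1
    field_simp
  have hLd : HasDerivAt L (α * x ^ (α-1) * H x + x ^ α * g') x := by
    apply hK.congr_of_eventuallyEq
    filter_upwards [isOpen_Ioi.mem_nhds (show x ∈ Ioi 0 from hx)] with y (hy : 0 < y)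
    exact (hKL y hy).symm
  -- integrability
  have hInt : ∀ y : ℝ, 0 < y → Integrable (fun s => max (y ^ α - s ^ α) 0) μ := by
    intro y hy
    refine (integrable_const (y ^ α)).mono' ?_ ?_
    · apply Measurable.aestronglyMeasurable; fun_prop
    · filter_upwards [hμ0] with s hs
      rw [Real.norm_eq_abs, abs_of_nonneg (le_max_right _ _)]
      apply max_le _ (Real.rpow_nonneg hy.le α)
      have : 0 ≤ s ^ α := Real.rpow_nonneg hs α
      linarith
  have hmax_sub : ∀ a b : ℝ, b ≤ a → max a 0 - max b 0 ≤ a - b := by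
    intro a b hba
    rcases le_or_gt 0 b with h | h
    · rw [max_eq_left (le_trans h hba), max_eq_left h]
    · rw [max_eq_right h.le]
      rcases le_or_gt 0 a with h2 | h2
      · rw [max_eq_left h2]; linarith
      · rw [max_eq_right h2.le]; linarith
  have hbound : ∀ u v : ℝ, 0 < u → u < v →
      (v ^ α - u ^ α) * F u ≤ L v - L u ∧ L v - L u ≤ (v ^ α - u ^ α) * F v := by
    intro u v hu huv
    have hv : 0 < v := hu.trans huv
    have hsub : L v - L u = ∫ s, (max (v ^ α - s ^ α) 0 - max (u ^ α - s ^ α) 0) ∂μ :=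
      (integral_sub (hInt v hv) (hInt u hu)).symm
    have huv' : u ^ α ≤ v ^ α := Real.rpow_le_rpow hu.le huv.le hα.le
    have e1 : ∫ s, (Iic u).indicator (fun _ => v ^ α - u ^ α) s ∂μ
        = (v ^ α - u ^ α) * F u := by
      rw [integral_indicator_const _ measurableSet_Iic, smul_eq_mul, hF, mul_comm]
      rfl
    have e2 : ∫ s, (Iic v).indicator (fun _ => v ^ α - u ^ α) s ∂μ
        = (v ^ α - u ^ α) * F v := by
      rw [integral_indicator_const _ measurableSet_Iic, smul_eq_mul, hF, mul_comm]
      rfl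
    constructor
    · rw [hsub, ← e1]
      apply integral_mono_ae ((integrable_const _).indicator measurableSet_Iic)
        ((hInt v hv).sub (hInt u hu))
      filter_upwards [hμ0] with s hs
      simp only [Pi.sub_apply]
      by_cases hsu : s ≤ u
      · rw [indicator_of_mem (show s ∈ Iic u from hsu)]
        have h1 : s ^ α ≤ u ^ α := Real.rpow_le_rpow hs hsu hα.le
        rw [max_eq_left (by linarith), max_eq_left (by linarith)]
        linarith
      · rw [indicator_of_notMem (show s ∉ Iic u from hsu)]
        have := max_le_max (sub_le_sub_right huv' (s ^ α)) (le_refl (0:ℝ))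
        linarith
    · rw [hsub, ← e2]
      apply integral_mono_ae ((hInt v hv).sub (hInt u hu))
        ((integrable_const _).indicator measurableSet_Iic)
      filter_upwards [hμ0] with s hs
      simp only [Pi.sub_apply]
      by_cases hsv : s ≤ v
      · rw [indicator_of_mem (show s ∈ Iic v from hsv)]
        have := hmax_sub (v ^ α - s ^ α) (u ^ α - s ^ α) (by linarith)
        linarith
      · rw [indicator_of_notMem (show s ∉ Iic v from hsv)]
        push_neg at hsv
        have h0 : v ^ α ≤ s ^ α := Real.rpow_le_rpow hv.le hsv.le hα.le
        rw [max_eq_right (by linarith)]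
        have : (0:ℝ) ≤ max (u ^ α - s ^ α) 0 := le_max_right _ _
        linarith
  -- slope squeeze
  set R : ℝ → ℝ := slope (fun z : ℝ => z ^ α) x with hR
  have hr : Tendsto R (𝓝[≠] x) (𝓝 (α * x ^ (α - 1))) :=
    hasDerivAt_iff_tendsto_slope.mp (Real.hasDerivAt_rpow_const (Or.inl hxne))
  have hFt : Tendsto F (𝓝[≠] x) (𝓝 (F x)) := hcont.tendsto.mono_left nhdsWithin_le_nhds
  have hev : ∀ᶠ y in 𝓝[≠] x,
      min (R y * F x) (R y * F y) ≤ slope L x y ∧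
      slope L x y ≤ max (R y * F x) (R y * F y) := by
    have h1 : ∀ᶠ y in 𝓝[≠] x, 0 < y :=
      eventually_nhdsWithin_of_eventually_nhds (isOpen_Ioi.eventually_mem hx)
    filter_upwards [h1, self_mem_nhdsWithin] with y hy0 hyx
    have hyx' : y ≠ x := hyx
    rcases lt_or_gt_of_ne hyx' with hlt | hgt
    · -- y < x
      obtain ⟨hb1, hb2⟩ := hbound y x hy0 hlt
      have hd : 0 < x - y := by linarith
      have hs : slope L x y = (L x - L y) / (x - y) := by
        rw [slope_comm, slope_def_field]
      have hsr : R y = (x ^ α - y ^ α) / (x - y) := by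
        rw [hR, slope_comm, slope_def_field]
      constructor
      · refine le_trans (min_le_right _ _) ?_
        rw [hs, hsr, div_mul_eq_mul_div]
        exact div_le_div_of_nonneg_right hb1 hd.le
      · refine le_trans ?_ (le_max_left _ _)
        rw [hs, hsr, div_mul_eq_mul_div]
        exact div_le_div_of_nonneg_right hb2 hd.le
    · -- x < y
      obtain ⟨hb1, hb2⟩ := hbound x y hx hgt
      have hd : 0 < y - x := by linarith
      have hs : slope L x y = (L y - L x) / (y - x) := slope_def_field L x y
      have hsr : R y = (y ^ α - x ^ α) / (y - x) := slope_def_field _ x y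
      constructor
      · refine le_trans (min_le_left _ _) ?_
        rw [hs, hsr, div_mul_eq_mul_div]
        exact div_le_div_of_nonneg_right hb1 hd.le
      · refine le_trans ?_ (le_max_right _ _)
        rw [hs, hsr, div_mul_eq_mul_div]
        exact div_le_div_of_nonneg_right hb2 hd.le
  have hlow : Tendsto (fun y => min (R y * F x) (R y * F y)) (𝓝[≠] x)
      (𝓝 (α * x ^ (α - 1) * F x)) := by
    have := Tendsto.min (hr.mul_const (F x)) (hr.mul hFt)
    rwa [min_self] at this
  have hhigh : Tendsto (fun y => max (R y * F x) (R y * F y)) (𝓝[≠] x)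
      (𝓝 (α * x ^ (α - 1) * F x)) := by
    have := Tendsto.max (hr.mul_const (F x)) (hr.mul hFt)
    rwa [max_self] at this
  have hslope : Tendsto (slope L x) (𝓝[≠] x) (𝓝 (α * x ^ (α - 1) * F x)) :=
    tendsto_of_tendsto_of_tendsto_of_le_of_le' hlow hhigh
      (hev.mono fun y h => h.1) (hev.mono fun y h => h.2)
  have hLd2 : HasDerivAt L (α * x ^ (α - 1) * F x) x :=
    hasDerivAt_iff_tendsto_slope.mpr hslope
  have huniq : α * x ^ (α - 1) * F x = α * x ^ (α-1) * H x + x ^ α * g' := hLd2.unique hLd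
  have hxα : x ^ α = x ^ (α - 1) * x := by
    rw [show α = α - 1 + 1 by ring]
    rw [Real.rpow_add_one hxne]
    ring_nf
  have hx1 : 0 < x ^ (α - 1) := Real.rpow_pos_of_pos hx _
  have hFx : F x = H x + (x / α) * g' := by
    have h2 : α * x ^ (α - 1) * F x = α * x ^ (α - 1) * (H x + (x/α) * g') := by
      rw [huniq, mul_add]
      congr 1
      rw [hxα]
      field_simp
    exact mul_left_cancel₀ (by positivity) h2
  have hgoal : ((kendallPow α ν n) (Set.Iic x)).toReal = F x := rfl
  rw [hgoal, hFx]
  congr 1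
  rw [hH]
  exact hWpow (1/x) (by positivity)
end

section
/- Let α > 0, let U denote the uniform probability distribution on (0,1), and let n ≥ 1 be an integer. Then the n-fold Kendall convolution power of U satisfies U^{△_α n}([0,x)) = (α/(α+1))^n (1 + n/α) x^n for 0 ≤ x < 1, and U^{△_α n}([0,x)) = (1 − 1/((α+1)x^α))^{n−1} (1 + (n−1)/((α+1)x^α)) for x ≥ 1. -/
open MeasureTheory Set
open scoped ENNReal Interval

lemma meas_parDens (α : ℝ) :
    Measurable fun x : ℝ => ENNReal.ofReal (if 1 < x then 2 * α * x ^ (-(2 * α) - 1) else 0) := by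
  apply ENNReal.measurable_ofReal.comp
  apply Measurable.ite measurableSet_Ioi
  · exact (measurable_id.pow measurable_const).const_mul _
  · exact measurable_const

lemma meas_mapMul (α : ℝ) : Measurable fun b : ℝ => Measure.map (fun x => b * x) (pareto α) := by
  apply Measure.measurable_of_measurable_coe
  intro s hs
  have h1 : ∀ b : ℝ, Measure.map (fun x => b * x) (pareto α) s
      = ∫⁻ x, s.indicator (fun _ => (1:ℝ≥0∞)) (b * x)
          * ENNReal.ofReal (if 1 < x then 2 * α * x ^ (-(2 * α) - 1) else 0) := by
    intro b
    rw [Measure.map_apply (measurable_const_mul b) hs, pareto,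
      withDensity_apply _ ((measurable_const_mul b) hs), ← lintegral_indicator ((measurable_const_mul b) hs)]
    congr 1
    funext x
    by_cases h : b * x ∈ s <;>
      simp [indicator, h, Set.mem_preimage]
  simp only [h1]
  exact Measurable.lintegral_prod_right'
    <| ((measurable_const.indicator hs).comp ((measurable_fst.mul measurable_snd))).mul
    ((meas_parDens α).comp measurable_snd)

lemma meas_kkLe (α : ℝ) : Measurable fun p : ℝ × ℝ => kendallKernelLe α p.1 p.2 := by
  apply Measure.measurable_of_measurable_coe
  intro s hs
  simp only [kendallKernelLe]
  have : ∀ p : ℝ × ℝ, (if p.2 = 0 then Measure.dirac (0:ℝ)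
      else ENNReal.ofReal (1 - (p.1 / p.2) ^ α) • Measure.dirac p.2
        + ENNReal.ofReal ((p.1 / p.2) ^ α) • Measure.map (fun x => p.2 * x) (pareto α)) s
      = if p.2 = 0 then Measure.dirac (0:ℝ) s
        else ENNReal.ofReal (1 - (p.1 / p.2) ^ α) * Measure.dirac p.2 s
          + ENNReal.ofReal ((p.1 / p.2) ^ α) * Measure.map (fun x => p.2 * x) (pareto α) s := by
    intro p
    split <;> simp [Measure.smul_apply, smul_eq_mul]
  simp only [this]
  have hset : MeasurableSet {p : ℝ × ℝ | p.2 = 0} := measurable_snd (measurableSet_singleton 0)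
  apply Measurable.ite hset measurable_const
  apply Measurable.add
  · apply Measurable.mul
    · exact ENNReal.measurable_ofReal.comp
        ((measurable_const.sub ((measurable_fst.div measurable_snd).pow measurable_const)))
    · exact (Measure.measurable_coe hs).comp (Measure.measurable_dirac.comp measurable_snd)
  · apply Measurable.mul
    · exact ENNReal.measurable_ofReal.comp ((measurable_fst.div measurable_snd).pow measurable_const)
    · exact (Measure.measurable_coe hs).comp ((meas_mapMul α).comp measurable_snd)

lemma meas_kk (α : ℝ) : Measurable fun p : ℝ × ℝ => kendallKernel α p.1 p.2 := by
  have : (fun p : ℝ × ℝ => kendallKernel α p.1 p.2)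
      = (fun p : ℝ × ℝ => kendallKernelLe α p.1 p.2) ∘ (fun p => (min p.1 p.2, max p.1 p.2)) := rfl
  rw [this]
  exact (meas_kkLe α).comp ((measurable_fst.min measurable_snd).prodMk
    (measurable_fst.max measurable_snd))

lemma meas_kk_left (α a : ℝ) : Measurable fun b : ℝ => kendallKernel α a b :=
  (meas_kk α).comp measurable_prodMk_left


lemma parDens_indicator (α : ℝ) :
    (fun t : ℝ => ENNReal.ofReal (if 1 < t then 2 * α * t ^ (-(2 * α) - 1) else 0))
      = (Ioi 1).indicator (fun t => ENNReal.ofReal (2 * α * t ^ (-(2 * α) - 1))) := by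
  funext t
  by_cases h : (1:ℝ) < t <;> simp [indicator, h]

lemma pareto_eq_zero {α : ℝ} {A : Set ℝ} (hA : MeasurableSet A) (h : A ⊆ Iic 1) :
    pareto α A = 0 := by
  rw [pareto, withDensity_apply _ hA]
  rw [parDens_indicator, lintegral_indicator measurableSet_Ioi,
    Measure.restrict_restrict measurableSet_Ioi]
  have : Ioi 1 ∩ A = ∅ := by
    apply eq_empty_of_forall_notMem
    rintro t ⟨ht1, htA⟩
    exact absurd (mem_Iic.mp (h htA)) (not_le.mpr ht1)
  simp [this]

lemma pareto_Ico {α : ℝ} (hα : 0 < α) {y : ℝ} (hy : 1 ≤ y) :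
    pareto α (Ico 0 y) = ENNReal.ofReal (1 - y ^ (-(2 * α))) := by
  rw [pareto, withDensity_apply _ measurableSet_Ico]
  rw [parDens_indicator, lintegral_indicator measurableSet_Ioi,
    Measure.restrict_restrict measurableSet_Ioi]
  have hset : Ioi (1:ℝ) ∩ Ico 0 y = Ioo 1 y := by
    ext t
    constructor
    · rintro ⟨h1, _, h2⟩; exact ⟨h1, h2⟩
    · rintro ⟨h1, h2⟩; exact ⟨h1, le_of_lt (lt_trans one_pos h1), h2⟩
  rw [hset]
  have hInt : IntegrableOn (fun t : ℝ => 2 * α * t ^ (-(2 * α) - 1)) (Ioo 1 y) volume := by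
    have h0 : (0:ℝ) ∉ [[(1:ℝ), y]] := by
      rw [Set.uIcc_of_le hy]
      rintro ⟨h, -⟩; linarith
    have := (intervalIntegral.intervalIntegrable_rpow (μ := volume) (r := -(2 * α) - 1) (Or.inr h0)).const_mul (2 * α)
    rw [intervalIntegrable_iff_integrableOn_Ioc_of_le hy] at this
    exact this.mono_set Ioo_subset_Ioc_self
  rw [← ofReal_integral_eq_lintegral_ofReal hInt]
  · congr 1
    rw [← integral_Ioc_eq_integral_Ioo, ← intervalIntegral.integral_of_le hy,
      intervalIntegral.integral_const_mul, integral_rpow]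
    · have h1 : -(2 * α) - 1 + 1 = -(2 * α) := by ring
      rw [h1, Real.one_rpow]
      have hne : α ≠ 0 := ne_of_gt hα
      field_simp
      ring
    · refine Or.inr ⟨?_, ?_⟩
      · intro h; nlinarith
      · rw [Set.uIcc_of_le hy]; rintro ⟨h, -⟩; linarith
  · filter_upwards [self_mem_ae_restrict (measurableSet_Ioo : MeasurableSet (Ioo (1:ℝ) y))]
    rintro t ⟨ht1, -⟩
    have : (0:ℝ) < t := lt_trans one_pos ht1
    positivity

lemma pareto_mom {α : ℝ} (hα : 0 < α) {y : ℝ} (hy : 1 ≤ y) :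
    ∫⁻ t in Ico 0 y, ENNReal.ofReal (t ^ α) ∂(pareto α)
      = ENNReal.ofReal (2 * (1 - y ^ (-α))) := by
  rw [pareto, restrict_withDensity measurableSet_Ico,
    lintegral_withDensity_eq_lintegral_mul _ ?m1 ?m2]
  case m1 =>
    exact (ENNReal.measurable_ofReal.comp (Measurable.ite measurableSet_Ioi
      ((measurable_id.pow measurable_const).const_mul _) measurable_const))
  case m2 => exact ENNReal.measurable_ofReal.comp (measurable_id.pow measurable_const)
  have hcong : ∀ t : ℝ,
      (ENNReal.ofReal (if 1 < t then 2 * α * t ^ (-(2 * α) - 1) else 0) * ENNReal.ofReal (t ^ α))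
        = (Ioi 1).indicator (fun t => ENNReal.ofReal (2 * α * t ^ (-α - 1))) t := by
    intro t
    by_cases h : (1:ℝ) < t
    · have ht : (0:ℝ) < t := lt_trans one_pos h
      simp only [indicator, h, if_pos, mem_Ioi]
      rw [← ENNReal.ofReal_mul (by positivity)]
      congr 1
      rw [mul_assoc, ← Real.rpow_add ht]
      congr 2
      ring
    · rw [if_neg h]
      simp [indicator, h]
  simp only [Pi.mul_apply]
  simp only [hcong]
  rw [lintegral_indicator measurableSet_Ioi,
    Measure.restrict_restrict measurableSet_Ioi]
  have hset : Ioi (1:ℝ) ∩ Ico 0 y = Ioo 1 y := by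
    ext t
    constructor
    · rintro ⟨h1, _, h2⟩; exact ⟨h1, h2⟩
    · rintro ⟨h1, h2⟩; exact ⟨h1, le_of_lt (lt_trans one_pos h1), h2⟩
  rw [hset]
  have hInt : IntegrableOn (fun t : ℝ => 2 * α * t ^ (-α - 1)) (Ioo 1 y) volume := by
    have h0 : (0:ℝ) ∉ [[(1:ℝ), y]] := by
      rw [Set.uIcc_of_le hy]
      rintro ⟨h, -⟩; linarith
    have := (intervalIntegral.intervalIntegrable_rpow (μ := volume) (r := -α - 1) (Or.inr h0)).const_mul (2 * α)
    rw [intervalIntegrable_iff_integrableOn_Ioc_of_le hy] at this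
    exact this.mono_set Ioo_subset_Ioc_self
  rw [← ofReal_integral_eq_lintegral_ofReal hInt]
  · congr 1
    rw [← integral_Ioc_eq_integral_Ioo, ← intervalIntegral.integral_of_le hy,
      intervalIntegral.integral_const_mul, integral_rpow]
    · have h1 : -α - 1 + 1 = -α := by ring
      rw [h1, Real.one_rpow]
      have hne : α ≠ 0 := ne_of_gt hα
      field_simp
      ring
    · refine Or.inr ⟨?_, ?_⟩
      · intro h; nlinarith
      · rw [Set.uIcc_of_le hy]; rintro ⟨h, -⟩; linarith
  · filter_upwards [self_mem_ae_restrict (measurableSet_Ioo : MeasurableSet (Ioo (1:ℝ) y))]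
    rintro t ⟨ht1, -⟩
    have : (0:ℝ) < t := lt_trans one_pos ht1
    positivity

lemma pareto_mom_zero {α : ℝ} {y : ℝ} (hy : y ≤ 1) :
    ∫⁻ t in Ico 0 y, ENNReal.ofReal (t ^ α) ∂(pareto α) = 0 := by
  rw [pareto, restrict_withDensity measurableSet_Ico,
    lintegral_withDensity_eq_lintegral_mul _ ?m1 ?m2]
  case m1 =>
    exact (ENNReal.measurable_ofReal.comp (Measurable.ite measurableSet_Ioi
      ((measurable_id.pow measurable_const).const_mul _) measurable_const))
  case m2 => exact ENNReal.measurable_ofReal.comp (measurable_id.pow measurable_const)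
  rw [← lintegral_zero (μ := volume.restrict (Ico 0 y))]
  apply setLIntegral_congr_fun measurableSet_Ico
  intro t ht
  have : ¬ (1:ℝ) < t := by
    rcases ht with ⟨-, h2⟩; intro h; linarith
  simp [this]


lemma preimage_mul_Ico {b x : ℝ} (hb : 0 < b) :
    (fun t => b * t) ⁻¹' (Ico 0 x) = Ico 0 (x / b) := by
  ext t
  simp only [mem_preimage, mem_Ico]
  constructor
  · rintro ⟨h1, h2⟩
    exact ⟨nonneg_of_mul_nonneg_right h1 hb, (lt_div_iff₀' hb).mpr h2⟩
  · rintro ⟨h1, h2⟩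
    exact ⟨mul_nonneg hb.le h1, (lt_div_iff₀' hb).mp h2⟩

lemma kkLe_Ico {α p q x : ℝ} (hα : 0 < α) (hp : 0 ≤ p) (hpq : p ≤ q) (hq : 0 < q)
    (hx : 0 < x) :
    kendallKernelLe α p q (Ico 0 x)
      = if q < x then ENNReal.ofReal (1 - p ^ α * q ^ α / (x ^ α * x ^ α)) else 0 := by
  have hqα : (0:ℝ) < q ^ α := Real.rpow_pos_of_pos hq α
  have hxα : (0:ℝ) < x ^ α := Real.rpow_pos_of_pos hx α
  have hA : (p / q) ^ α = p ^ α / q ^ α := Real.div_rpow hp hq.le α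
  have hA1 : (p / q) ^ α ≤ 1 :=
    Real.rpow_le_one (by positivity) ((div_le_one hq).mpr hpq) hα.le
  have hA0 : (0:ℝ) ≤ (p / q) ^ α := Real.rpow_nonneg (by positivity) α
  rw [kendallKernelLe, if_neg hq.ne', Measure.add_apply, Measure.smul_apply,
    Measure.smul_apply, smul_eq_mul, smul_eq_mul,
    Measure.map_apply (measurable_const_mul q) measurableSet_Ico,
    preimage_mul_Ico hq]
  by_cases h : q < x
  · rw [if_pos h]
    have hxq1 : (1:ℝ) ≤ x / q := le_of_lt ((one_lt_div hq).mpr h)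
    rw [pareto_Ico hα hxq1]
    have hqmem : q ∈ Ico 0 x := ⟨hq.le, h⟩
    rw [Measure.dirac_apply' _ measurableSet_Ico, indicator_of_mem hqmem, Pi.one_apply, mul_one]
    have hB : (x / q) ^ (-(2 * α)) = q ^ α * q ^ α / (x ^ α * x ^ α) := by
      rw [show -(2 * α) = -α + -α by ring, Real.rpow_add (by positivity),
        Real.rpow_neg (by positivity), Real.div_rpow hx.le hq.le]
      field_simp
    have hB1 : (x / q) ^ (-(2 * α)) ≤ 1 := by
      rw [hB, div_le_one (by positivity)]
      have : q ^ α ≤ x ^ α := Real.rpow_le_rpow hq.le (le_of_lt h) hα.le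
      nlinarith
    have hB0 : (0:ℝ) ≤ (x / q) ^ (-(2 * α)) := Real.rpow_nonneg (by positivity) _
    rw [← ENNReal.ofReal_mul hA0, ← ENNReal.ofReal_add (by linarith) (by nlinarith)]
    congr 1
    rw [hB, hA]
    field_simp
    ring
  · rw [if_neg h]
    push_neg at h
    rw [pareto_eq_zero measurableSet_Ico (by
      intro t ht
      rcases ht with ⟨-, h2⟩
      have : x / q ≤ 1 := (div_le_one hq).mpr h
      exact le_of_lt (lt_of_lt_of_le h2 this)), mul_zero, add_zero,
      Measure.dirac_apply' _ measurableSet_Ico,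
      indicator_of_notMem (by rintro ⟨-, h2⟩; exact absurd h2 (not_lt.mpr h)), mul_zero]

lemma kk_Ico {α a b x : ℝ} (hα : 0 < α) (ha : 0 ≤ a) (hb : 0 < b) (hx : 0 < x) :
    kendallKernel α a b (Ico 0 x)
      = if max a b < x then ENNReal.ofReal (1 - a ^ α * b ^ α / (x ^ α * x ^ α)) else 0 := by
  rcases le_total a b with hab | hab
  · rw [kendallKernel, min_eq_left hab, max_eq_right hab]
    exact kkLe_Ico hα ha hab hb hx
  · rw [kendallKernel, min_eq_right hab, max_eq_left hab]
    rw [kkLe_Ico hα hb.le hab (lt_of_lt_of_le hb hab) hx]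
    rw [mul_comm (b ^ α) (a ^ α)]

lemma kk_Iio {α a b : ℝ} (hb : 0 < b) : kendallKernel α a b (Iio 0) = 0 := by
  have hm : 0 < max a b := lt_max_of_lt_right hb
  rw [kendallKernel, kendallKernelLe, if_neg hm.ne', Measure.add_apply,
    Measure.smul_apply, Measure.smul_apply, smul_eq_mul, smul_eq_mul,
    Measure.map_apply (measurable_const_mul _) measurableSet_Iio,
    Measure.dirac_apply' _ measurableSet_Iio,
    indicator_of_notMem (by simp [not_lt.mpr hm.le])]
  have hpre : (fun t => max a b * t) ⁻¹' (Iio 0) = Iio 0 := by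
    ext t
    simp only [mem_preimage, mem_Iio]
    constructor
    · intro h
      by_contra h'
      push_neg at h'
      nlinarith
    · intro h
      exact mul_neg_of_pos_of_neg hm h
  rw [hpre, pareto_eq_zero measurableSet_Iio (fun t ht => mem_Iic.mpr (le_of_lt (lt_trans ht one_pos)))]
  simp

lemma kkLe_mom {α p q x : ℝ} (hα : 0 < α) (hp : 0 ≤ p) (hpq : p ≤ q) (hq : 0 < q)
    (hx : 0 < x) :
    ∫⁻ s in Ico 0 x, ENNReal.ofReal (s ^ α) ∂(kendallKernelLe α p q)
      = if q < x then ENNReal.ofReal (p ^ α + q ^ α - 2 * (p ^ α * q ^ α / x ^ α)) else 0 := by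
  classical
  have hqα : (0:ℝ) < q ^ α := Real.rpow_pos_of_pos hq α
  have hxα : (0:ℝ) < x ^ α := Real.rpow_pos_of_pos hx α
  have hpα : (0:ℝ) ≤ p ^ α := Real.rpow_nonneg hp α
  have hpqα : p ^ α ≤ q ^ α := Real.rpow_le_rpow hp hpq hα.le
  have meas_f : Measurable fun s : ℝ => ENNReal.ofReal (s ^ α) :=
    ENNReal.measurable_ofReal.comp (measurable_id.pow measurable_const)
  rw [kendallKernelLe, if_neg hq.ne', Measure.restrict_add, Measure.restrict_smul,
    Measure.restrict_smul, lintegral_add_measure, lintegral_smul_measure,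
    lintegral_smul_measure, smul_eq_mul, smul_eq_mul]
  have hmap : ∫⁻ s in Ico 0 x, ENNReal.ofReal (s ^ α)
        ∂(Measure.map (fun t => q * t) (pareto α))
      = ENNReal.ofReal (q ^ α) * ∫⁻ t in Ico 0 (x / q), ENNReal.ofReal (t ^ α) ∂(pareto α) := by
    rw [Measure.restrict_map (measurable_const_mul q) measurableSet_Ico,
      lintegral_map meas_f (measurable_const_mul q), preimage_mul_Ico hq]
    rw [← lintegral_const_mul _ meas_f]
    apply setLIntegral_congr_fun measurableSet_Ico
    intro t ht
    beta_reduce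
    rw [← ENNReal.ofReal_mul hqα.le, ← Real.mul_rpow hq.le ht.1]
  rw [hmap]
  by_cases h : q < x
  · rw [if_pos h]
    have hxq1 : (1:ℝ) ≤ x / q := le_of_lt ((one_lt_div hq).mpr h)
    rw [pareto_mom hα hxq1, restrict_dirac' measurableSet_Ico,
      if_pos (mem_Ico.mpr ⟨hq.le, h⟩ : q ∈ Ico 0 x), lintegral_dirac' _ meas_f]
    have hC : (x / q) ^ (-α) = q ^ α / x ^ α := by
      rw [Real.rpow_neg (by positivity), Real.div_rpow hx.le hq.le, inv_div]
    have hC1 : (x / q) ^ (-α) ≤ 1 := by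
      rw [hC, div_le_one hxα]
      exact Real.rpow_le_rpow hq.le (le_of_lt h) hα.le
    have hC0 : (0:ℝ) ≤ (x / q) ^ (-α) := Real.rpow_nonneg (by positivity) _
    have hA : (p / q) ^ α = p ^ α / q ^ α := Real.div_rpow hp hq.le α
    have hA1 : (p / q) ^ α ≤ 1 :=
      Real.rpow_le_one (by positivity) ((div_le_one hq).mpr hpq) hα.le
    have hA0 : (0:ℝ) ≤ (p / q) ^ α := Real.rpow_nonneg (by positivity) α
    rw [← ENNReal.ofReal_mul (by linarith), ← ENNReal.ofReal_mul hqα.le,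
      ← ENNReal.ofReal_mul hA0, ← ENNReal.ofReal_add (mul_nonneg (by linarith) hqα.le) (mul_nonneg hA0 (mul_nonneg hqα.le (by linarith)))]
    congr 1
    rw [hA, hC]
    field_simp
    ring
  · rw [if_neg h]
    push_neg at h
    rw [pareto_mom_zero ((div_le_one hq).mpr h), mul_zero, mul_zero, add_zero,
      restrict_dirac' measurableSet_Ico,
      if_neg (show ¬ q ∈ Ico 0 x by rw [mem_Ico]; rintro ⟨-, h2⟩; exact absurd h2 (not_lt.mpr h))]
    simp

lemma kk_mom {α a b x : ℝ} (hα : 0 < α) (ha : 0 ≤ a) (hb : 0 < b) (hx : 0 < x) :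
    ∫⁻ s in Ico 0 x, ENNReal.ofReal (s ^ α) ∂(kendallKernel α a b)
      = if max a b < x
          then ENNReal.ofReal (a ^ α + b ^ α - 2 * (a ^ α * b ^ α / x ^ α)) else 0 := by
  rcases le_total a b with hab | hab
  · rw [kendallKernel, min_eq_left hab, max_eq_right hab]
    exact kkLe_mom hα ha hab hb hx
  · rw [kendallKernel, min_eq_right hab, max_eq_left hab]
    rw [kkLe_mom hα hb.le hab (lt_of_lt_of_le hb hab) hx]
    rw [mul_comm (b ^ α) (a ^ α), add_comm (b ^ α) (a ^ α)]


lemma rpow_integrableOn {α t : ℝ} (hα : 0 < α) (ht : 0 < t) :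
    IntegrableOn (fun b : ℝ => b ^ α) (Ioo 0 t) volume := by
  have := intervalIntegral.intervalIntegrable_rpow' (a := 0) (b := t) (r := α) (by linarith)
  rw [intervalIntegrable_iff_integrableOn_Ioc_of_le ht.le] at this
  exact this.mono_set Ioo_subset_Ioc_self

lemma poly_integrableOn {α t : ℝ} (c₀ c₁ : ℝ) (hα : 0 < α) (ht : 0 < t) :
    IntegrableOn (fun b : ℝ => c₀ + c₁ * b ^ α) (Ioo 0 t) volume := by
  apply Integrable.add
  · exact integrableOn_const measure_Ioo_lt_top.ne
  · exact (rpow_integrableOn hα ht).const_mul c₁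

lemma poly_integral {α t : ℝ} (c₀ c₁ : ℝ) (hα : 0 < α) (ht : 0 < t) :
    ∫ b in Ioo (0:ℝ) t, (c₀ + c₁ * b ^ α)
      = c₀ * t + c₁ * (t ^ (α + 1) / (α + 1)) := by
  rw [integral_add (integrableOn_const (C := c₀) measure_Ioo_lt_top.ne)
      ((rpow_integrableOn hα ht).const_mul c₁),
    integral_const_mul, setIntegral_const, measureReal_def, Real.volume_Ioo, sub_zero,
    ENNReal.toReal_ofReal ht.le, smul_eq_mul]
  rw [← integral_Ioc_eq_integral_Ioo, ← intervalIntegral.integral_of_le ht.le,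
    integral_rpow (Or.inl (by linarith)), Real.zero_rpow (by linarith)]
  ring

lemma inner_Iio {α a : ℝ} :
    ∫⁻ b in Ioo (0:ℝ) 1, kendallKernel α a b (Iio 0) = 0 := by
  rw [← lintegral_zero (μ := volume.restrict (Ioo (0:ℝ) 1))]
  apply setLIntegral_congr_fun measurableSet_Ioo
  intro b hb
  exact kk_Iio hb.1

lemma inner_F {α a x : ℝ} (hα : 0 < α) (ha : 0 ≤ a) (hx : 0 < x) :
    ∫⁻ b in Ioo (0:ℝ) 1, kendallKernel α a b (Ico 0 x)
      = if a < x then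
          ENNReal.ofReal (min 1 x - (min 1 x) ^ (α + 1) / (α + 1) / (x ^ α * x ^ α) * a ^ α)
        else 0 := by
  set t := min 1 x with hts
  have ht : 0 < t := lt_min one_pos hx
  have htx : t ≤ x := min_le_right 1 x
  have hxα : (0:ℝ) < x ^ α := Real.rpow_pos_of_pos hx α
  by_cases h : a < x
  · rw [if_pos h]
    have haα : a ^ α ≤ x ^ α := Real.rpow_le_rpow ha h.le hα.le
    set c₁ : ℝ := -(a ^ α / (x ^ α * x ^ α)) with hc₁
    have hcong : ∀ b ∈ Ioo (0:ℝ) 1, kendallKernel α a b (Ico 0 x)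
        = (Iio x).indicator (fun b => ENNReal.ofReal (1 + c₁ * b ^ α)) b := by
      intro b hb
      rw [kk_Ico hα ha hb.1 hx]
      by_cases hbx : b < x
      · rw [if_pos (max_lt h hbx), indicator_of_mem (mem_Iio.mpr hbx)]
        congr 1
        rw [hc₁]; ring
      · rw [if_neg (fun hc => hbx (lt_of_le_of_lt (le_max_right a b) hc)),
          indicator_of_notMem (by simpa using hbx)]
    rw [setLIntegral_congr_fun measurableSet_Ioo hcong,
      lintegral_indicator measurableSet_Iio,
      Measure.restrict_restrict measurableSet_Iio]
    have hset : Iio x ∩ Ioo (0:ℝ) 1 = Ioo 0 t := by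
      ext b
      simp only [mem_inter_iff, mem_Iio, mem_Ioo, hts, lt_min_iff]
      tauto
    rw [hset, ← ofReal_integral_eq_lintegral_ofReal (poly_integrableOn 1 c₁ hα ht) ?nn]
    case nn =>
      filter_upwards [self_mem_ae_restrict measurableSet_Ioo]
      rintro b ⟨hb0, hbt⟩
      simp only [Pi.zero_apply]
      have hbα : b ^ α ≤ x ^ α := Real.rpow_le_rpow hb0.le (by linarith) hα.le
      have hb0α : (0:ℝ) ≤ b ^ α := Real.rpow_nonneg hb0.le α
      have h1 : a ^ α * b ^ α ≤ x ^ α * x ^ α :=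
        mul_le_mul haα hbα hb0α hxα.le
      have h2 : a ^ α * b ^ α / (x ^ α * x ^ α) ≤ 1 := by
        rw [div_le_one (by positivity)]; exact h1
      have : 1 + c₁ * b ^ α = 1 - a ^ α * b ^ α / (x ^ α * x ^ α) := by rw [hc₁]; ring
      rw [this]
      linarith
    rw [poly_integral 1 c₁ hα ht]
    congr 1
    rw [hc₁]; ring
  · rw [if_neg h]
    push_neg at h
    rw [← lintegral_zero (μ := volume.restrict (Ioo (0:ℝ) 1))]
    apply setLIntegral_congr_fun measurableSet_Ioo
    intro b hb
    beta_reduce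
    rw [kk_Ico hα ha hb.1 hx, if_neg]
    intro hc
    exact absurd (lt_of_le_of_lt (le_max_left a b) hc) (not_lt.mpr h)

lemma inner_M {α a x : ℝ} (hα : 0 < α) (ha : 0 ≤ a) (hx : 0 < x) :
    ∫⁻ b in Ioo (0:ℝ) 1, (∫⁻ s in Ico 0 x, ENNReal.ofReal (s ^ α) ∂(kendallKernel α a b))
      = if a < x then
          ENNReal.ofReal ((min 1 x) ^ (α + 1) / (α + 1)
            + (min 1 x - 2 * ((min 1 x) ^ (α + 1) / (α + 1) / x ^ α)) * a ^ α)
        else 0 := by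
  set t := min 1 x with hts
  have ht : 0 < t := lt_min one_pos hx
  have htx : t ≤ x := min_le_right 1 x
  have hxα : (0:ℝ) < x ^ α := Real.rpow_pos_of_pos hx α
  by_cases h : a < x
  · rw [if_pos h]
    have haα : a ^ α ≤ x ^ α := Real.rpow_le_rpow ha h.le hα.le
    have ha0α : (0:ℝ) ≤ a ^ α := Real.rpow_nonneg ha α
    set c₁ : ℝ := 1 - 2 * (a ^ α / x ^ α) with hc₁
    have hcong : ∀ b ∈ Ioo (0:ℝ) 1,
        (∫⁻ s in Ico 0 x, ENNReal.ofReal (s ^ α) ∂(kendallKernel α a b))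
        = (Iio x).indicator (fun b => ENNReal.ofReal (a ^ α + c₁ * b ^ α)) b := by
      intro b hb
      rw [kk_mom hα ha hb.1 hx]
      by_cases hbx : b < x
      · rw [if_pos (max_lt h hbx), indicator_of_mem (mem_Iio.mpr hbx)]
        congr 1
        rw [hc₁]
        field_simp
        ring
      · rw [if_neg (fun hc => hbx (lt_of_le_of_lt (le_max_right a b) hc)),
          indicator_of_notMem (by simpa using hbx)]
    rw [setLIntegral_congr_fun measurableSet_Ioo hcong,
      lintegral_indicator measurableSet_Iio,
      Measure.restrict_restrict measurableSet_Iio]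
    have hset : Iio x ∩ Ioo (0:ℝ) 1 = Ioo 0 t := by
      ext b
      simp only [mem_inter_iff, mem_Iio, mem_Ioo, hts, lt_min_iff]
      tauto
    rw [hset, ← ofReal_integral_eq_lintegral_ofReal (poly_integrableOn _ c₁ hα ht) ?nn]
    case nn =>
      filter_upwards [self_mem_ae_restrict measurableSet_Ioo]
      rintro b ⟨hb0, hbt⟩
      simp only [Pi.zero_apply]
      have hbα : b ^ α ≤ x ^ α := Real.rpow_le_rpow hb0.le (by linarith) hα.le
      have hb0α : (0:ℝ) ≤ b ^ α := Real.rpow_nonneg hb0.le α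
      have key : a ^ α + c₁ * b ^ α
          = a ^ α * (1 - b ^ α / x ^ α) + b ^ α * (1 - a ^ α / x ^ α) := by
        rw [hc₁]
        field_simp
        ring
      rw [key]
      have h1 : b ^ α / x ^ α ≤ 1 := by rw [div_le_one hxα]; exact hbα
      have h2 : a ^ α / x ^ α ≤ 1 := by rw [div_le_one hxα]; exact haα
      nlinarith
    rw [poly_integral _ c₁ hα ht]
    congr 1
    rw [hc₁]
    field_simp
    ring
  · rw [if_neg h]
    push_neg at h
    rw [← lintegral_zero (μ := volume.restrict (Ioo (0:ℝ) 1))]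
    apply setLIntegral_congr_fun measurableSet_Ioo
    intro b hb
    beta_reduce
    rw [kk_mom hα ha hb.1 hx, if_neg]
    intro hc
    exact absurd (lt_of_le_of_lt (le_max_left a b) hc) (not_lt.mpr h)




lemma meas_bindU (α : ℝ) :
    Measurable fun a : ℝ =>
      (volume.restrict (Ioo (0:ℝ) 1)).bind (fun b => kendallKernel α a b) := by
  apply Measure.measurable_of_measurable_coe
  intro s hs
  have h1 : ∀ a : ℝ, (volume.restrict (Ioo (0:ℝ) 1)).bind (fun b => kendallKernel α a b) s
      = ∫⁻ b, kendallKernel α a b s ∂(volume.restrict (Ioo (0:ℝ) 1)) := fun a =>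
    Measure.bind_apply hs (meas_kk_left α a).aemeasurable
  simp only [h1]
  exact Measurable.lintegral_prod_right' ((Measure.measurable_coe hs).comp (meas_kk α))

lemma conv_apply {α : ℝ} (μ : Measure ℝ) {s : Set ℝ} (hs : MeasurableSet s) :
    kendallConv α μ (volume.restrict (Ioo (0:ℝ) 1)) s
      = ∫⁻ a, (∫⁻ b in Ioo (0:ℝ) 1, kendallKernel α a b s) ∂μ := by
  rw [kendallConv, Measure.bind_apply hs (meas_bindU α).aemeasurable]
  exact lintegral_congr fun a => Measure.bind_apply hs (meas_kk_left α a).aemeasurable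

lemma conv_mom {α : ℝ} (μ : Measure ℝ) (x : ℝ) :
    ∫⁻ s in Ico 0 x, ENNReal.ofReal (s ^ α)
        ∂(kendallConv α μ (volume.restrict (Ioo (0:ℝ) 1)))
      = ∫⁻ a, (∫⁻ b in Ioo (0:ℝ) 1,
          (∫⁻ s in Ico 0 x, ENNReal.ofReal (s ^ α) ∂(kendallKernel α a b))) ∂μ := by
  have meas_f : Measurable ((Ico (0:ℝ) x).indicator fun s : ℝ => ENNReal.ofReal (s ^ α)) :=
    (ENNReal.measurable_ofReal.comp (measurable_id.pow measurable_const)).indicator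
      measurableSet_Ico
  rw [← lintegral_indicator measurableSet_Ico, kendallConv,
    Measure.lintegral_bind (meas_bindU α).aemeasurable meas_f.aemeasurable]
  refine lintegral_congr fun a => ?_
  rw [Measure.lintegral_bind (meas_kk_left α a).aemeasurable meas_f.aemeasurable]
  exact lintegral_congr fun b => lintegral_indicator measurableSet_Ico _

lemma step {α : ℝ} (hα : 0 < α) {μ : Measure ℝ} {x Fv Mv : ℝ}
    (hx : 0 < x) (hμ0 : μ (Iio 0) = 0)
    (hF : μ (Ico 0 x) = ENNReal.ofReal Fv)
    (hM : ∫⁻ a in Ico 0 x, ENNReal.ofReal (a ^ α) ∂μ = ENNReal.ofReal Mv)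
    (hFv : 0 ≤ Fv) (hMv : 0 ≤ Mv) :
    kendallConv α μ (volume.restrict (Ioo (0:ℝ) 1)) (Iio 0) = 0
    ∧ kendallConv α μ (volume.restrict (Ioo (0:ℝ) 1)) (Ico 0 x)
        = ENNReal.ofReal (min 1 x * Fv
            - (min 1 x) ^ (α + 1) / (α + 1) / (x ^ α * x ^ α) * Mv)
    ∧ ∫⁻ s in Ico 0 x, ENNReal.ofReal (s ^ α)
          ∂(kendallConv α μ (volume.restrict (Ioo (0:ℝ) 1)))
        = ENNReal.ofReal ((min 1 x) ^ (α + 1) / (α + 1) * Fv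
            + (min 1 x - 2 * ((min 1 x) ^ (α + 1) / (α + 1) / x ^ α)) * Mv) := by
  set t := min 1 x with hts
  have ht : 0 < t := lt_min one_pos hx
  have htx : t ≤ x := min_le_right 1 x
  have hxα : (0:ℝ) < x ^ α := Real.rpow_pos_of_pos hx α
  have htαx : t ^ α ≤ x ^ α := Real.rpow_le_rpow ht.le htx hα.le
  set w : ℝ := t ^ (α + 1) / (α + 1) with hws
  have hw0 : 0 ≤ w := by positivity
  have hwt : t ^ (α + 1) = t ^ α * t := by
    rw [Real.rpow_add ht, Real.rpow_one]
  have hwX : w / x ^ α ≤ t := by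
    rw [div_le_iff₀ hxα, hws, div_le_iff₀ (by positivity : (0:ℝ) < α + 1)]
    have h1 : t ^ α * t ≤ x ^ α * t := by nlinarith
    nlinarith [mul_nonneg hxα.le ht.le, hα.le, hwt]
  have meas_A : Measurable fun a : ℝ => ENNReal.ofReal (a ^ α) :=
    ENNReal.measurable_ofReal.comp (measurable_id.pow measurable_const)
  refine ⟨?c0, ?cF, ?cM⟩
  case c0 =>
    rw [conv_apply μ measurableSet_Iio,
      lintegral_congr (fun a : ℝ => inner_Iio (α := α) (a := a)), lintegral_zero]
  case cF =>
    rw [conv_apply μ measurableSet_Ico]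
    have hae : ∀ᵐ a ∂μ, (∫⁻ b in Ioo (0:ℝ) 1, kendallKernel α a b (Ico 0 x))
        = (Ico 0 x).indicator
            (fun a => ENNReal.ofReal (t - w / (x ^ α * x ^ α) * a ^ α)) a := by
      rw [ae_iff]
      refine measure_mono_null (fun a hmem => ?_) hμ0
      simp only [mem_setOf_eq] at hmem
      by_contra hnot
      simp only [mem_Iio, not_lt] at hnot
      apply hmem
      rw [inner_F hα hnot hx]
      by_cases hax : a < x
      · rw [if_pos hax, indicator_of_mem (mem_Ico.mpr ⟨hnot, hax⟩)]
      · rw [if_neg hax, indicator_of_notMem (by simp [mem_Ico, hax])]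
    refine (lintegral_congr_ae hae).trans ?_
    rw [lintegral_indicator measurableSet_Ico]
    have hsplit : ∀ a ∈ Ico (0:ℝ) x,
        ENNReal.ofReal (t - w / (x ^ α * x ^ α) * a ^ α)
          = ENNReal.ofReal t
            - ENNReal.ofReal (w / (x ^ α * x ^ α)) * ENNReal.ofReal (a ^ α) := by
      intro a hamem
      rw [← ENNReal.ofReal_mul (by positivity), ENNReal.ofReal_sub]
      exact mul_nonneg (by positivity) (Real.rpow_nonneg hamem.1 α)
    rw [setLIntegral_congr_fun measurableSet_Ico hsplit]
    rw [lintegral_sub (meas_A.const_mul _) ?fin ?le]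
    case fin =>
      rw [lintegral_const_mul _ meas_A, hM]
      exact ENNReal.mul_ne_top ENNReal.ofReal_ne_top ENNReal.ofReal_ne_top
    case le =>
      filter_upwards [self_mem_ae_restrict measurableSet_Ico]
      rintro a ⟨ha0, hax⟩
      rw [← ENNReal.ofReal_mul (by positivity)]
      apply ENNReal.ofReal_le_ofReal
      have h1 : a ^ α ≤ x ^ α := Real.rpow_le_rpow ha0 hax.le hα.le
      have h2 : w / (x ^ α * x ^ α) * a ^ α ≤ w / (x ^ α * x ^ α) * x ^ α :=
        mul_le_mul_of_nonneg_left h1 (by positivity)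
      have h3 : w / (x ^ α * x ^ α) * x ^ α = w / x ^ α := by
        field_simp
        try ring
      linarith
    rw [setLIntegral_const, lintegral_const_mul _ meas_A, hM, hF,
      ← ENNReal.ofReal_mul ht.le, ← ENNReal.ofReal_mul (by positivity),
      ← ENNReal.ofReal_sub _ (by positivity)]
  case cM =>
    rw [conv_mom μ x]
    have hae : ∀ᵐ a ∂μ,
        (∫⁻ b in Ioo (0:ℝ) 1,
          (∫⁻ s in Ico 0 x, ENNReal.ofReal (s ^ α) ∂(kendallKernel α a b)))
        = (Ico 0 x).indicator
            (fun a => ENNReal.ofReal (w + (t - 2 * (w / x ^ α)) * a ^ α)) a := by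
      rw [ae_iff]
      refine measure_mono_null (fun a hmem => ?_) hμ0
      simp only [mem_setOf_eq] at hmem
      by_contra hnot
      simp only [mem_Iio, not_lt] at hnot
      apply hmem
      rw [inner_M hα hnot hx]
      by_cases hax : a < x
      · rw [if_pos hax, indicator_of_mem (mem_Ico.mpr ⟨hnot, hax⟩)]
      · rw [if_neg hax, indicator_of_notMem (by simp [mem_Ico, hax])]
    refine (lintegral_congr_ae hae).trans ?_
    rw [lintegral_indicator measurableSet_Ico]
    have hsplit : ∀ a ∈ Ico (0:ℝ) x,
        ENNReal.ofReal (w + (t - 2 * (w / x ^ α)) * a ^ α)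
          = (ENNReal.ofReal w + ENNReal.ofReal t * ENNReal.ofReal (a ^ α))
            - ENNReal.ofReal (2 * (w / x ^ α)) * ENNReal.ofReal (a ^ α) := by
      intro a hamem
      have haα : 0 ≤ a ^ α := Real.rpow_nonneg hamem.1 α
      have hre : w + (t - 2 * (w / x ^ α)) * a ^ α
          = (w + t * a ^ α) - 2 * (w / x ^ α) * a ^ α := by ring
      rw [hre, ENNReal.ofReal_sub _ (by positivity),
        ENNReal.ofReal_add hw0 (by positivity), ENNReal.ofReal_mul ht.le,
        ENNReal.ofReal_mul (show (0:ℝ) ≤ 2 * (w / x ^ α) by positivity)]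
    rw [setLIntegral_congr_fun measurableSet_Ico hsplit]
    rw [lintegral_sub (meas_A.const_mul _) ?fin2 ?le2]
    case fin2 =>
      rw [lintegral_const_mul _ meas_A, hM]
      exact ENNReal.mul_ne_top ENNReal.ofReal_ne_top ENNReal.ofReal_ne_top
    case le2 =>
      filter_upwards [self_mem_ae_restrict measurableSet_Ico]
      rintro a ⟨ha0, hax⟩
      have haα : 0 ≤ a ^ α := Real.rpow_nonneg ha0 α
      rw [← ENNReal.ofReal_mul (show (0:ℝ) ≤ 2 * (w / x ^ α) by positivity),
        ← ENNReal.ofReal_mul ht.le, ← ENNReal.ofReal_add hw0 (by positivity)]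
      apply ENNReal.ofReal_le_ofReal
      have h1 : a ^ α ≤ x ^ α := Real.rpow_le_rpow ha0 hax.le hα.le
      have h2 : w / x ^ α * a ^ α ≤ w / x ^ α * x ^ α :=
        mul_le_mul_of_nonneg_left h1 (by positivity)
      have h3 : w / x ^ α * x ^ α = w := by field_simp
      have h4 : w / x ^ α * a ^ α ≤ t * a ^ α :=
        mul_le_mul_of_nonneg_right hwX haα
      nlinarith
    rw [lintegral_add_left measurable_const, setLIntegral_const,
      lintegral_const_mul _ meas_A, lintegral_const_mul _ meas_A, hM, hF,
      ← ENNReal.ofReal_mul hw0, ← ENNReal.ofReal_mul ht.le,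
      ← ENNReal.ofReal_mul (by positivity),
      ← ENNReal.ofReal_add (by positivity) (by positivity),
      ← ENNReal.ofReal_sub _ (by positivity)]
    congr 1
    ring


noncomputable def kcF (α : ℝ) (n : ℕ) (x : ℝ) : ℝ :=
  if x < 1 then (α / (α + 1)) ^ n * (1 + n / α) * x ^ n
  else (1 - 1 / ((α + 1) * x ^ α)) ^ (n - 1) * (1 + ((n : ℝ) - 1) / ((α + 1) * x ^ α))

noncomputable def kcM (α : ℝ) (n : ℕ) (x : ℝ) : ℝ :=
  if x < 1 then (n / α) * (α / (α + 1)) ^ n * x ^ n * x ^ α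
  else (n / (α + 1)) * (1 - 1 / ((α + 1) * x ^ α)) ^ (n - 1)

lemma rpow_facts {α x : ℝ} (hα : 0 < α) (hx1 : 1 ≤ x) :
    1 ≤ x ^ α := Real.one_le_rpow hx1 hα.le

lemma kcF_nonneg {α x : ℝ} (hα : 0 < α) (hx : 0 < x) (n : ℕ) : 0 ≤ kcF α n x := by
  rw [kcF]
  split_ifs with h
  · have : (0:ℝ) ≤ 1 + n / α := by positivity
    positivity
  · push_neg at h
    have hX : 1 ≤ x ^ α := Real.one_le_rpow h hα.le
    have hD : 1 ≤ (α + 1) * x ^ α := by nlinarith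
    have hu : 1 / ((α + 1) * x ^ α) ≤ 1 := by
      rw [div_le_one (by linarith)]; exact hD
    have hu0 : 0 ≤ 1 / ((α + 1) * x ^ α) := by positivity
    apply mul_nonneg (pow_nonneg (by linarith) _)
    have : ((n : ℝ) - 1) / ((α + 1) * x ^ α) ≥ -(1 / ((α + 1) * x ^ α)) := by
      rw [ge_iff_le, neg_div', div_le_div_iff₀ (by linarith) (by linarith)]
      have : (-1 : ℝ) ≤ (n : ℝ) - 1 := by
        have : (0:ℝ) ≤ (n : ℝ) := Nat.cast_nonneg n
        linarith
      nlinarith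
    linarith

lemma kcM_nonneg {α x : ℝ} (hα : 0 < α) (hx : 0 < x) (n : ℕ) : 0 ≤ kcM α n x := by
  rw [kcM]
  split_ifs with h
  · positivity
  · push_neg at h
    have hX : 1 ≤ x ^ α := Real.one_le_rpow h hα.le
    have hD : 1 ≤ (α + 1) * x ^ α := by nlinarith
    have hu : 1 / ((α + 1) * x ^ α) ≤ 1 := by
      rw [div_le_one (by linarith)]; exact hD
    apply mul_nonneg (by positivity) (pow_nonneg (by linarith) _)

lemma kcF_one {α x : ℝ} (hα : 0 < α) (hx : 0 < x) :
    min 1 x * 1 - (min 1 x) ^ (α + 1) / (α + 1) / (x ^ α * x ^ α) * 0 = kcF α 1 x := by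
  rw [mul_zero, sub_zero, mul_one, kcF]
  split_ifs with h
  · rw [min_eq_right h.le, pow_one, pow_one]
    have hne : α ≠ 0 := ne_of_gt hα
    have hne1 : α + 1 ≠ 0 := by positivity
    field_simp
    norm_num
  · rw [min_eq_left (not_lt.mp h)]
    norm_num

lemma kcM_one {α x : ℝ} (hα : 0 < α) (hx : 0 < x) :
    (min 1 x) ^ (α + 1) / (α + 1) * 1
      + (min 1 x - 2 * ((min 1 x) ^ (α + 1) / (α + 1) / x ^ α)) * 0 = kcM α 1 x := by
  rw [mul_zero, add_zero, mul_one, kcM]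
  split_ifs with h
  · rw [min_eq_right h.le, pow_one, Real.rpow_add hx, Real.rpow_one]
    have hne : α ≠ 0 := ne_of_gt hα
    have hne1 : α + 1 ≠ 0 := by positivity
    field_simp
    ring
  · rw [min_eq_left (not_lt.mp h), Real.one_rpow]
    norm_num

lemma kcF_rec {α x : ℝ} (hα : 0 < α) (hx : 0 < x) (n : ℕ) (hn : 1 ≤ n) :
    min 1 x * kcF α n x
      - (min 1 x) ^ (α + 1) / (α + 1) / (x ^ α * x ^ α) * kcM α n x
      = kcF α (n + 1) x := by
  have hne : α ≠ 0 := ne_of_gt hα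
  have hne1 : α + 1 ≠ 0 := by positivity
  have hXpos : (0:ℝ) < x ^ α := Real.rpow_pos_of_pos hx α
  have hXne : x ^ α ≠ 0 := ne_of_gt hXpos
  rw [kcF, kcF, kcM]
  split_ifs with h
  · rw [min_eq_right h.le, Real.rpow_add hx, Real.rpow_one]
    rw [div_pow, div_pow]
    field_simp
    push_cast
    ring
  · obtain ⟨m, rfl⟩ : ∃ m, n = m + 1 := ⟨n - 1, (Nat.succ_pred_eq_of_pos hn).symm⟩
    rw [min_eq_left (not_lt.mp h), Real.one_rpow]
    simp only [Nat.add_sub_cancel]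
    push_cast
    have hD : (0:ℝ) < (α + 1) * x ^ α := by positivity
    have hDne : (α + 1) * x ^ α ≠ 0 := ne_of_gt hD
    rw [pow_succ]
    generalize (1 - 1 / ((α + 1) * x ^ α)) ^ m = P
    field_simp
    ring

lemma kcM_rec {α x : ℝ} (hα : 0 < α) (hx : 0 < x) (n : ℕ) (hn : 1 ≤ n) :
    (min 1 x) ^ (α + 1) / (α + 1) * kcF α n x
      + (min 1 x - 2 * ((min 1 x) ^ (α + 1) / (α + 1) / x ^ α)) * kcM α n x
      = kcM α (n + 1) x := by
  have hne : α ≠ 0 := ne_of_gt hα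
  have hne1 : α + 1 ≠ 0 := by positivity
  have hXpos : (0:ℝ) < x ^ α := Real.rpow_pos_of_pos hx α
  have hXne : x ^ α ≠ 0 := ne_of_gt hXpos
  rw [kcF, kcM, kcM]
  split_ifs with h
  · rw [min_eq_right h.le, Real.rpow_add hx, Real.rpow_one]
    rw [div_pow, div_pow]
    field_simp
    push_cast
    ring
  · obtain ⟨m, rfl⟩ : ∃ m, n = m + 1 := ⟨n - 1, (Nat.succ_pred_eq_of_pos hn).symm⟩
    rw [min_eq_left (not_lt.mp h), Real.one_rpow]
    simp only [Nat.add_sub_cancel]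
    push_cast
    have hD : (0:ℝ) < (α + 1) * x ^ α := by positivity
    have hDne : (α + 1) * x ^ α ≠ 0 := ne_of_gt hD
    rw [pow_succ]
    generalize (1 - 1 / ((α + 1) * x ^ α)) ^ m = P
    field_simp
    ring

lemma conv_Iio (α : ℝ) (μ : Measure ℝ) :
    kendallConv α μ (volume.restrict (Ioo (0:ℝ) 1)) (Iio 0) = 0 := by
  rw [conv_apply μ measurableSet_Iio,
    lintegral_congr (fun a : ℝ => inner_Iio (α := α) (a := a)), lintegral_zero]

lemma main_ind (α : ℝ) (hα : 0 < α) (n : ℕ) :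
    kendallPow α (volume.restrict (Ioo (0:ℝ) 1)) (n+1) (Iio 0) = 0
    ∧ ∀ x : ℝ, 0 < x →
      kendallPow α (volume.restrict (Ioo (0:ℝ) 1)) (n+1) (Ico 0 x)
          = ENNReal.ofReal (kcF α (n+1) x)
      ∧ ∫⁻ a in Ico 0 x, ENNReal.ofReal (a ^ α)
            ∂(kendallPow α (volume.restrict (Ioo (0:ℝ) 1)) (n+1))
          = ENNReal.ofReal (kcM α (n+1) x) := by
  induction n with
  | zero =>
    have hpow : kendallPow α (volume.restrict (Ioo (0:ℝ) 1)) 1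
        = kendallConv α (Measure.dirac 0) (volume.restrict (Ioo (0:ℝ) 1)) := rfl
    refine ⟨by rw [hpow]; exact conv_Iio α _, fun x hx => ?_⟩
    have h0 : (Measure.dirac (0:ℝ)) (Iio 0) = 0 := by
      rw [Measure.dirac_apply' _ measurableSet_Iio, indicator_of_notMem (by simp)]
    have hF : (Measure.dirac (0:ℝ)) (Ico 0 x) = ENNReal.ofReal 1 := by
      rw [Measure.dirac_apply' _ measurableSet_Ico,
        indicator_of_mem (mem_Ico.mpr ⟨le_refl 0, hx⟩)]
      simp
    have hM : ∫⁻ a in Ico 0 x, ENNReal.ofReal (a ^ α) ∂(Measure.dirac (0:ℝ))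
        = ENNReal.ofReal 0 := by
      classical
      rw [restrict_dirac' measurableSet_Ico, if_pos (mem_Ico.mpr ⟨le_refl 0, hx⟩),
        lintegral_dirac' _ (show Measurable fun a : ℝ => ENNReal.ofReal (a ^ α) from
          ENNReal.measurable_ofReal.comp (measurable_id.pow measurable_const))]
      rw [Real.zero_rpow hα.ne']
    obtain ⟨-, hFc, hMc⟩ := step hα hx h0 hF hM zero_le_one le_rfl
    rw [hpow]
    exact ⟨by rw [hFc, kcF_one hα hx], by rw [hMc, kcM_one hα hx]⟩
  | succ m ih =>
    obtain ⟨h0, hv⟩ := ih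
    have hpow : kendallPow α (volume.restrict (Ioo (0:ℝ) 1)) (m+1+1)
        = kendallConv α (kendallPow α (volume.restrict (Ioo (0:ℝ) 1)) (m+1))
            (volume.restrict (Ioo (0:ℝ) 1)) := rfl
    refine ⟨by rw [hpow]; exact conv_Iio α _, fun x hx => ?_⟩
    obtain ⟨hF, hM⟩ := hv x hx
    obtain ⟨-, hFc, hMc⟩ := step hα hx h0 hF hM (kcF_nonneg hα hx _) (kcM_nonneg hα hx _)
    rw [hpow]
    exact ⟨by rw [hFc, kcF_rec hα hx (m+1) (Nat.le_add_left 1 m)],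
      by rw [hMc, kcM_rec hα hx (m+1) (Nat.le_add_left 1 m)]⟩

/-- For `α > 0`, `U` the uniform distribution on `(0,1)` and `n ≥ 1`, the `n`-fold Kendall
convolution power of `U` satisfies
`U^{△_α n}([0,x)) = (α/(α+1))^n (1 + n/α) x^n` for `0 ≤ x < 1`, and
`U^{△_α n}([0,x)) = (1 - 1/((α+1)x^α))^(n-1) (1 + (n-1)/((α+1)x^α))` for `x ≥ 1`. -/
theorem kendallPow_uniform_cdf
    (α : ℝ) (hα : 0 < α) (n : ℕ) (hn : 1 ≤ n) (x : ℝ) :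
    (0 ≤ x → x < 1 →
      ((kendallPow α (volume.restrict (Set.Ioo (0:ℝ) 1)) n) (Set.Ico 0 x)).toReal
        = (α / (α + 1)) ^ n * (1 + n / α) * x ^ n)
    ∧ (1 ≤ x →
      ((kendallPow α (volume.restrict (Set.Ioo (0:ℝ) 1)) n) (Set.Ico 0 x)).toReal
        = (1 - 1 / ((α + 1) * x ^ α)) ^ (n - 1)
            * (1 + ((n : ℝ) - 1) / ((α + 1) * x ^ α))) := by
  obtain ⟨m, rfl⟩ : ∃ m, n = m + 1 := ⟨n - 1, (Nat.succ_pred_eq_of_pos hn).symm⟩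
  constructor
  · intro hx0 hx1
    rcases eq_or_lt_of_le hx0 with rfl | hx
    · rw [Set.Ico_self, measure_empty]
      simp [zero_pow (Nat.succ_ne_zero m)]
    · rw [((main_ind α hα m).2 x hx).1, ENNReal.toReal_ofReal (kcF_nonneg hα hx _),
        kcF, if_pos hx1]
  · intro hx1
    have hx : 0 < x := lt_of_lt_of_le one_pos hx1
    rw [((main_ind α hα m).2 x hx).1, ENNReal.toReal_ofReal (kcF_nonneg hα hx _),
      kcF, if_neg (not_lt.mpr hx1)]
end

section
/- For every α > 0 and every integer n ≥ 1, the α-th moment of the n-fold Kendall convolution power of δ_1 equals n; that is, ∫_{[0,∞)} x^α (δ_1^{△_α n})(dx) = n. -/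
open MeasureTheory Set
open scoped ENNReal NNReal

namespace KendallAux

lemma measurable_rpow_const (q : ℝ) : Measurable fun x : ℝ => x ^ q := by
  apply measurable_of_continuousOn_compl_singleton (0 : ℝ)
  intro x hx
  exact (Real.continuousAt_rpow_const x q (Or.inl hx)).continuousWithinAt

lemma paretoDensity_measurable (α : ℝ) :
    Measurable fun x : ℝ =>
      ENNReal.ofReal (if 1 < x then 2 * α * x ^ (-(2 * α) - 1) else 0) := by
  apply ENNReal.measurable_ofReal.comp
  exact Measurable.ite measurableSet_Ioi
    (measurable_const.mul (measurable_rpow_const _)) measurable_const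

lemma pareto_lintegral (α : ℝ) (hα : 0 < α) {q : ℝ} (hq : q < 2 * α) :
    ∫⁻ x, ENNReal.ofReal (x ^ q) ∂(pareto α) = ENNReal.ofReal (2 * α / (2 * α - q)) := by
  rw [pareto, lintegral_withDensity_eq_lintegral_mul _ (paretoDensity_measurable α)
    ((measurable_rpow_const q).ennreal_ofReal)]
  have h1 : (fun x : ℝ =>
        (ENNReal.ofReal (if 1 < x then 2 * α * x ^ (-(2 * α) - 1) else 0) *
          ENNReal.ofReal (x ^ q)))
      = (Ioi (1:ℝ)).indicator (fun x => ENNReal.ofReal (2 * α * x ^ (-(2 * α) - 1 + q))) := by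
    funext x
    by_cases hx : 1 < x
    · have hx0 : (0:ℝ) < x := lt_trans zero_lt_one hx
      rw [Set.indicator_of_mem (show x ∈ Ioi (1:ℝ) from hx), if_pos hx,
        ← ENNReal.ofReal_mul (by positivity)]
      congr 1
      rw [mul_assoc, ← Real.rpow_add hx0]
    · rw [Set.indicator_of_notMem (show x ∉ Ioi (1:ℝ) from hx), if_neg hx]
      simp
  simp only [Pi.mul_apply]
  rw [h1, lintegral_indicator measurableSet_Ioi]
  have hp : -(2 * α) - 1 + q < -1 := by linarith
  have hint : IntegrableOn (fun x : ℝ => x ^ (-(2 * α) - 1 + q)) (Ioi 1) :=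
    integrableOn_Ioi_rpow_of_lt hp zero_lt_one
  rw [← ofReal_integral_eq_lintegral_ofReal (hint.const_mul (2 * α))
    (by filter_upwards [ae_restrict_mem measurableSet_Ioi] with x hx
        have hx0 : (0:ℝ) < x := lt_trans zero_lt_one hx
        positivity)]
  rw [MeasureTheory.integral_const_mul, integral_Ioi_rpow_of_lt hp zero_lt_one]
  congr 1
  rw [Real.one_rpow]
  have h2 : -(2 * α) - 1 + q + 1 = q - 2 * α := by ring
  rw [h2]
  have h3 : (2 : ℝ) * α - q ≠ 0 := by linarith
  have h4 : q - 2 * α ≠ 0 := by linarith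
  field_simp
  ring

lemma instFin (α : ℝ) (hα : 0 < α) : (pareto α) Set.univ = 1 := by
  have h := pareto_lintegral α hα (q := 0) (by linarith)
  simp only [Real.rpow_zero, ENNReal.ofReal_one, lintegral_one] at h
  rw [h, sub_zero, div_self (by linarith : (2:ℝ) * α ≠ 0), ENNReal.ofReal_one]

lemma pareto_Iic (α : ℝ) : (pareto α) (Iic 1) = 0 := by
  rw [pareto, withDensity_apply _ measurableSet_Iic]
  have h : ∀ᵐ x ∂(volume.restrict (Iic (1:ℝ))),
      ENNReal.ofReal (if 1 < x then 2 * α * x ^ (-(2 * α) - 1) else 0) = 0 := by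
    filter_upwards [ae_restrict_mem measurableSet_Iic] with x hx
    rw [if_neg (not_lt.2 hx)]
    simp
  rw [lintegral_congr_ae h, lintegral_zero]

lemma pareto_ae (α : ℝ) : ∀ᵐ x ∂(pareto α), 1 < x := by
  have h := measure_eq_zero_iff_ae_notMem.mp (pareto_Iic α)
  filter_upwards [h] with x hx
  simpa [Set.mem_Iic, not_le] using hx

lemma pareto_scaled_moment (α : ℝ) (hα : 0 < α) {b : ℝ} (hb : 0 < b) :
    ∫⁻ t, ENNReal.ofReal ((b * t) ^ α) ∂(pareto α) = ENNReal.ofReal (b ^ α) * 2 := by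
  have h1 : (fun t : ℝ => ENNReal.ofReal ((b * t) ^ α))
      =ᵐ[pareto α] fun t => ENNReal.ofReal (b ^ α) * ENNReal.ofReal (t ^ α) := by
    filter_upwards [pareto_ae α] with t ht
    rw [Real.mul_rpow hb.le (by linarith), ENNReal.ofReal_mul (by positivity)]
  rw [lintegral_congr_ae h1,
    lintegral_const_mul _ ((measurable_rpow_const α).ennreal_ofReal),
    pareto_lintegral α hα (by linarith : α < 2 * α)]
  congr 1
  have h2 : 2 * α - α = α := by ring
  rw [h2, (show (2:ℝ≥0∞) = ENNReal.ofReal 2 by norm_num)]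
  congr 1
  field_simp

lemma kendallKernel_eq (α : ℝ) {x : ℝ} (hx : 1 ≤ x) :
    kendallKernel α x 1 =
      ENNReal.ofReal (1 - (1 / x) ^ α) • Measure.dirac x +
        ENNReal.ofReal ((1 / x) ^ α) • Measure.map (fun t => x * t) (pareto α) := by
  have hx0 : x ≠ 0 := by intro h; rw [h] at hx; linarith
  rw [kendallKernel, min_eq_right hx, max_eq_left hx, kendallKernelLe, if_neg hx0]

lemma r_nonneg (α : ℝ) {x : ℝ} (hx : 1 ≤ x) : 0 ≤ (1 / x) ^ α :=
  Real.rpow_nonneg (one_div_nonneg.mpr (by linarith)) α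

lemma r_le_one (α : ℝ) (hα : 0 < α) {x : ℝ} (hx : 1 ≤ x) : (1 / x) ^ α ≤ 1 := by
  apply Real.rpow_le_one (by positivity) _ hα.le
  rw [div_le_one (by linarith : (0:ℝ) < x)]
  exact hx

lemma kendallKernel_univ (α : ℝ) (hα : 0 < α) {x : ℝ} (hx : 1 ≤ x) :
    kendallKernel α x 1 Set.univ = 1 := by
  rw [kendallKernel_eq α hx, Measure.add_apply, Measure.smul_apply, Measure.smul_apply,
    smul_eq_mul, smul_eq_mul, Measure.map_apply (measurable_const_mul x) MeasurableSet.univ,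
    Set.preimage_univ, instFin α hα]
  rw [Measure.dirac_apply' _ MeasurableSet.univ, Set.indicator_of_mem (Set.mem_univ x)]
  simp only [Pi.one_apply, mul_one]
  rw [← ENNReal.ofReal_add (by linarith [r_le_one α hα hx]) (r_nonneg α hx), sub_add_cancel,
    ENNReal.ofReal_one]

lemma kendallKernel_Iio (α : ℝ) (hα : 0 < α) {x : ℝ} (hx : 1 ≤ x) :
    kendallKernel α x 1 (Iio 1) = 0 := by
  rw [kendallKernel_eq α hx, Measure.add_apply, Measure.smul_apply, Measure.smul_apply,
    smul_eq_mul, smul_eq_mul]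
  have h1 : Measure.dirac x (Iio (1:ℝ)) = 0 := by
    rw [Measure.dirac_apply' _ measurableSet_Iio,
      Set.indicator_of_notMem (by simpa [Set.mem_Iio] using not_lt.2 hx)]
  have h2 : Measure.map (fun t => x * t) (pareto α) (Iio 1) = 0 := by
    rw [Measure.map_apply (measurable_const_mul x) measurableSet_Iio]
    apply measure_mono_null _ (pareto_Iic α)
    intro t ht
    simp only [Set.mem_preimage, Set.mem_Iio] at ht
    simp only [Set.mem_Iic]
    by_contra h
    push_neg at h
    nlinarith
  rw [h1, h2, mul_zero, mul_zero, add_zero]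

lemma kendallKernel_moment (α : ℝ) (hα : 0 < α) {x : ℝ} (hx : 1 ≤ x) :
    ∫⁻ y, ENNReal.ofReal (y ^ α) ∂(kendallKernel α x 1) = ENNReal.ofReal (x ^ α) + 1 := by
  have hx0 : (0:ℝ) < x := lt_of_lt_of_le zero_lt_one hx
  have hmeas : Measurable fun y : ℝ => ENNReal.ofReal (y ^ α) :=
    (measurable_rpow_const α).ennreal_ofReal
  rw [kendallKernel_eq α hx, lintegral_add_measure, lintegral_smul_measure,
    lintegral_smul_measure, lintegral_dirac' _ hmeas,
    lintegral_map hmeas (measurable_const_mul x), pareto_scaled_moment α hα hx0]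
  have hxα : (1:ℝ) ≤ x ^ α := Real.one_le_rpow hx hα.le
  have hr : (1 / x) ^ α * x ^ α = 1 := by
    rw [← Real.mul_rpow (by positivity) hx0.le, one_div_mul_cancel hx0.ne', Real.one_rpow]
  rw [smul_eq_mul, smul_eq_mul, ← mul_assoc, ← ENNReal.ofReal_mul (r_nonneg α hx), hr, ENNReal.ofReal_one, one_mul,
    ← ENNReal.ofReal_mul (by linarith [r_le_one α hα hx])]
  have h1 : (1 - (1 / x) ^ α) * x ^ α = x ^ α - 1 := by
    rw [sub_mul, one_mul, hr]
  rw [h1, (show (2:ℝ≥0∞) = ENNReal.ofReal 2 by norm_num),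
    ← ENNReal.ofReal_add (by linarith) (by norm_num),
    (show x ^ α - 1 + 2 = x ^ α + 1 by ring),
    ENNReal.ofReal_add (by positivity) (by norm_num), ENNReal.ofReal_one]

lemma kendallKernelLe_measurable (α : ℝ) (hα : 0 < α) {γ : Type*} [MeasurableSpace γ]
    {u v : γ → ℝ} (hu : Measurable u) (hv : Measurable v) :
    Measurable fun z => kendallKernelLe α (u z) (v z) := by
  haveI : IsFiniteMeasure (pareto α) :=
    ⟨by rw [instFin α hα]; exact ENNReal.one_lt_top⟩
  apply Measure.measurable_of_measurable_coe
  intro s hs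
  have hmap : ∀ b : ℝ, Measure.map (fun t => b * t) (pareto α) s
      = ∫⁻ t, s.indicator 1 (b * t) ∂(pareto α) := by
    intro b
    rw [Measure.map_apply (measurable_const_mul b) hs,
      ← lintegral_indicator_one ((measurable_const_mul b) hs)]
    apply lintegral_congr
    intro t
    by_cases h : b * t ∈ s <;> simp [Set.indicator_apply, Set.mem_preimage, h]
  have heq : (fun z => kendallKernelLe α (u z) (v z) s) = fun z =>
      if v z = 0 then Measure.dirac (0:ℝ) s
      else ENNReal.ofReal (1 - (u z / v z) ^ α) * s.indicator 1 (v z)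
        + ENNReal.ofReal ((u z / v z) ^ α) * ∫⁻ t, s.indicator 1 (v z * t) ∂(pareto α) := by
    funext z
    rw [kendallKernelLe, apply_ite (fun μ : Measure ℝ => μ s)]
    by_cases h : v z = 0
    · rw [if_pos h, if_pos h]
    · rw [if_neg h, if_neg h, Measure.add_apply, Measure.smul_apply, Measure.smul_apply,
        smul_eq_mul, smul_eq_mul, Measure.dirac_apply' _ hs, hmap]
  rw [heq]
  apply Measurable.ite (hv (measurableSet_singleton 0)) measurable_const
  apply Measurable.add
  · exact (ENNReal.measurable_ofReal.comp
      (measurable_const.sub ((measurable_rpow_const α).comp (hu.div hv)))).mul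
      ((measurable_one.indicator hs).comp hv)
  · refine (ENNReal.measurable_ofReal.comp
      ((measurable_rpow_const α).comp (hu.div hv))).mul ?_
    exact Measurable.lintegral_prod_right'
      ((measurable_one.indicator hs).comp ((hv.comp measurable_fst).mul measurable_snd))

lemma measurable_K1 (α : ℝ) (hα : 0 < α) :
    Measurable fun x : ℝ => kendallKernel α x 1 :=
  kendallKernelLe_measurable α hα (measurable_id.min measurable_const)
    (measurable_id.max measurable_const)

lemma measurable_Kx (α : ℝ) (hα : 0 < α) (x : ℝ) :
    Measurable fun y : ℝ => kendallKernel α x y :=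
  kendallKernelLe_measurable α hα (measurable_const.min measurable_id)
    (measurable_const.max measurable_id)

lemma pow_succ_eq (α : ℝ) (hα : 0 < α) (μ : Measure ℝ) :
    kendallConv α μ (Measure.dirac 1) = μ.bind (fun x => kendallKernel α x 1) := by
  rw [kendallConv]
  congr 1
  funext x
  exact Measure.dirac_bind (measurable_Kx α hα x) 1

lemma pow_one_eq (α : ℝ) (hα : 0 < α) :
    kendallPow α (Measure.dirac 1) 1 = Measure.dirac 1 := by
  show kendallConv α (Measure.dirac 0) (Measure.dirac 1) = Measure.dirac 1
  rw [pow_succ_eq α hα, Measure.dirac_bind (measurable_K1 α hα) 0]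
  rw [kendallKernel, min_eq_left zero_le_one, max_eq_right zero_le_one, kendallKernelLe,
    if_neg one_ne_zero]
  rw [zero_div, Real.zero_rpow hα.ne', sub_zero, ENNReal.ofReal_one, ENNReal.ofReal_zero,
    one_smul, zero_smul, add_zero]

lemma key (α : ℝ) (hα : 0 < α) :
    ∀ n : ℕ, 1 ≤ n →
      (kendallPow α (Measure.dirac 1) n) (Iio 1) = 0 ∧
      (kendallPow α (Measure.dirac 1) n) Set.univ = 1 ∧
      ∫⁻ x, ENNReal.ofReal (x ^ α) ∂(kendallPow α (Measure.dirac 1) n) = n := by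
  have hfmeas : Measurable fun y : ℝ => ENNReal.ofReal (y ^ α) :=
    (measurable_rpow_const α).ennreal_ofReal
  intro n
  induction n with
  | zero => intro h; omega
  | succ n ih =>
    intro _
    by_cases hn : 1 ≤ n
    · obtain ⟨hsupp, huniv, hmom⟩ := ih hn
      set ν := kendallPow α (Measure.dirac 1) n with hν
      have hg := measurable_K1 α hα
      have hbind : kendallPow α (Measure.dirac 1) (n + 1)
          = ν.bind (fun x => kendallKernel α x 1) := by
        show kendallConv α ν (Measure.dirac 1) = _
        exact pow_succ_eq α hα ν
      have hae : ∀ᵐ x ∂ν, 1 ≤ x := by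
        filter_upwards [measure_eq_zero_iff_ae_notMem.mp hsupp] with x hx
        simpa [Set.mem_Iio, not_lt] using hx
      refine ⟨?_, ?_, ?_⟩
      · rw [hbind, Measure.bind_apply measurableSet_Iio hg.aemeasurable]
        have h0 : (fun x => kendallKernel α x 1 (Iio 1)) =ᵐ[ν] fun _ => 0 := by
          filter_upwards [hae] with x hx
          exact kendallKernel_Iio α hα hx
        rw [lintegral_congr_ae h0, lintegral_zero]
      · rw [hbind, Measure.bind_apply MeasurableSet.univ hg.aemeasurable]
        have h0 : (fun x => kendallKernel α x 1 Set.univ) =ᵐ[ν] fun _ => 1 := by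
          filter_upwards [hae] with x hx
          exact kendallKernel_univ α hα hx
        rw [lintegral_congr_ae h0, lintegral_one, huniv]
      · rw [hbind, Measure.lintegral_bind hg.aemeasurable hfmeas.aemeasurable]
        have h0 : (fun x => ∫⁻ y, ENNReal.ofReal (y ^ α) ∂(kendallKernel α x 1))
            =ᵐ[ν] fun x => ENNReal.ofReal (x ^ α) + 1 := by
          filter_upwards [hae] with x hx
          exact kendallKernel_moment α hα hx
        rw [lintegral_congr_ae h0, lintegral_add_right _ measurable_const, hmom,
          lintegral_one, huniv]
        push_cast
        ring
    · have hn0 : n = 0 := by omega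
      subst hn0
      rw [pow_one_eq α hα]
      refine ⟨?_, ?_, ?_⟩
      · rw [Measure.dirac_apply' _ measurableSet_Iio,
          Set.indicator_of_notMem (by simp : (1:ℝ) ∉ Iio (1:ℝ))]
      · simp
      · rw [lintegral_dirac' _ hfmeas, Real.one_rpow, ENNReal.ofReal_one]
        norm_num

end KendallAux

/-- For every `α > 0` and integer `n ≥ 1`, the `α`-th moment of the `n`-fold Kendall
convolution power of `δ_1` equals `n`: `∫_{[0,∞)} x^α (δ_1^{△_α n})(dx) = n`. -/
theorem kendallPow_dirac_one_moment
    (α : ℝ) (hα : 0 < α) (n : ℕ) (hn : 1 ≤ n) :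
    ∫ x in Set.Ici (0:ℝ), x ^ α ∂(kendallPow α (Measure.dirac 1) n) = n := by
  obtain ⟨hsupp, huniv, hmom⟩ := KendallAux.key α hα n hn
  set ν := kendallPow α (Measure.dirac 1) n with hν
  have hae : ∀ᵐ x ∂ν, 1 ≤ x := by
    filter_upwards [measure_eq_zero_iff_ae_notMem.mp hsupp] with x hx
    simpa [Set.mem_Iio, not_lt] using hx
  have hmem : ∀ᵐ x ∂ν, x ∈ Set.Ici (0:ℝ) := by
    filter_upwards [hae] with x hx
    exact le_trans zero_le_one hx
  rw [Measure.restrict_eq_self_of_ae_mem hmem]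
  have hnn : 0 ≤ᵐ[ν] fun x : ℝ => x ^ α := by
    filter_upwards [hae] with x hx
    exact Real.rpow_nonneg (by linarith) α
  rw [integral_eq_lintegral_of_nonneg_ae hnn
    ((KendallAux.measurable_rpow_const α).aestronglyMeasurable)]
  rw [hmom]
  simp
end
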